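/- arXiv:1501.00395 — 4 statements merged into one kernel-verified Lean document; each statement's English description precedes it below -/
import Mathlib

section
/- Let Σ₀ = {α, S₀, ϑ₁, ϑ₂} be a strongly admissible quadruple such that i is not an eigenvalue of α. For k ∈ ℕ₀ let W_{Σ_k}(λ) = I_m + iΛ_k*S_k⁻¹(λI_n − α)⁻¹Λ_k, let C_k be the pseudo-exponential potential generated by Σ₀, and define H_k⁺ = 2W_{Σ_k}(i)P₁W_{Σ_k}(−i)* and H_k⁻ = 2W_{Σ_k}(−i)P₂W_{Σ_k}(i)*, where P₁ = (I_m + j)/2 and P₂ = (I_m − j)/2. Then for every k ∈ ℕ₀: (I_m + C_k)H_k⁻ = 0, H_{k+1}⁻(I_m + C_k) = 0, (I_m − C_k)H_k⁺ = 0, and H_{k+1}⁺(I_m − C_k) = 0. -/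
open Matrix
open scoped ComplexOrder

/-- The `m×m` signature matrix `j = diag(I_{m₁}, −I_{m₂})`. -/
noncomputable def sigJ (m₁ m₂ : ℕ) : Matrix (Fin m₁ ⊕ Fin m₂) (Fin m₁ ⊕ Fin m₂) ℂ :=
  Matrix.fromBlocks 1 0 0 (-1)

/-- A quadruple `{α, S₀, ϑ₁, ϑ₂}` is admissible if `S₀` is Hermitian positive definite and
`αS₀ − S₀α* = i(ϑ₁ϑ₁* + ϑ₂ϑ₂*)`. -/
def Admissible {n m₁ m₂ : ℕ} (α S₀ : Matrix (Fin n) (Fin n) ℂ)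
    (θ₁ : Matrix (Fin n) (Fin m₁) ℂ) (θ₂ : Matrix (Fin n) (Fin m₂) ℂ) : Prop :=
  S₀.PosDef ∧ α * S₀ - S₀ * αᴴ = Complex.I • (θ₁ * θ₁ᴴ + θ₂ * θ₂ᴴ)

/-- A pair `(α, θ)` is controllable if the columns of `θ, αθ, …, α^{n−1}θ` span `ℂⁿ`. -/
def Controllable {n p : ℕ} (α : Matrix (Fin n) (Fin n) ℂ) (θ : Matrix (Fin n) (Fin p) ℂ) :
    Prop :=
  Submodule.span ℂ
    {v : Fin n → ℂ | ∃ k : ℕ, k < n ∧ ∃ j : Fin p, v = fun i => (α ^ k * θ) i j} = ⊤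

/- ---------------------------------------------------------------------------------------- -/
/- Auxiliary lemmas                                                                          -/
/- ---------------------------------------------------------------------------------------- -/

private lemma mulc {N P : Type*} [Fintype N] [DecidableEq N] [Fintype P] {A B : Matrix N N ℂ}
    (h : A * B = 1) (X : Matrix N P ℂ) : A * (B * X) = X := by
  rw [← Matrix.mul_assoc, h, Matrix.one_mul]

private lemma dot_conj {N P : Type*} [Fintype N] [Fintype P] (A : Matrix N P ℂ) (u : N → ℂ)
    (w : P → ℂ) : star u ⬝ᵥ (A *ᵥ w) = star (Aᴴ *ᵥ u) ⬝ᵥ w := by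
  rw [star_mulVec, conjTranspose_conjTranspose, dotProduct_mulVec]

private lemma posDef_conj_aux {N : Type*} [Fintype N] [DecidableEq N] {S B : Matrix N N ℂ}
    (hS : S.PosDef) (hB : IsUnit B) : (B * S * Bᴴ).PosDef := by
  refine Matrix.PosDef.of_dotProduct_mulVec_pos ?_ ?_
  · show (B * S * Bᴴ)ᴴ = _
    rw [conjTranspose_mul, conjTranspose_mul, conjTranspose_conjTranspose, hS.1.eq,
      Matrix.mul_assoc]
  · intro x hx
    have hBH : IsUnit Bᴴ := by
      rw [Matrix.isUnit_iff_isUnit_det, Matrix.det_conjTranspose]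
      exact ((Matrix.isUnit_iff_isUnit_det _).1 hB).star
    have hy : Bᴴ *ᵥ x ≠ 0 := fun h0 =>
      hx ((Matrix.mulVec_injective_iff_isUnit.mpr hBH) (by rw [h0, Matrix.mulVec_zero]))
    have e : (B * S * Bᴴ) *ᵥ x = B *ᵥ (S *ᵥ (Bᴴ *ᵥ x)) := by
      rw [← Matrix.mulVec_mulVec, ← Matrix.mulVec_mulVec]
    rw [e, dot_conj]
    exact hS.dotProduct_mulVec_pos hy

/-- abstract unitarity: `W(λ̄)ᴴ W(λ) = 1`. -/
private lemma key_unit {N M : Type*} [Fintype N] [DecidableEq N] [Fintype M] [DecidableEq M]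
    (a S T A B Ga Gb : Matrix N N ℂ) (L : Matrix N M ℂ)
    (hTh : Tᴴ = T)
    (hST : S * T = 1) (hTS : T * S = 1)
    (hAGa : A * Ga = 1)
    (hBGb : B * Gb = 1)
    (hLy : a * S - S * aᴴ = Complex.I • (L * Lᴴ))
    (hkey : a * S - S * aᴴ = S * Bᴴ - A * S) :
    (1 + Complex.I • (Lᴴ * T * Gb * L))ᴴ * (1 + Complex.I • (Lᴴ * T * Ga * L)) = 1 := by
  have hcST : ∀ X : Matrix N M ℂ, S * (T * X) = X := fun X => by
    rw [← Matrix.mul_assoc, hST, Matrix.one_mul]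
  have hcTS : ∀ X : Matrix N M ℂ, T * (S * X) = X := fun X => by
    rw [← Matrix.mul_assoc, hTS, Matrix.one_mul]
  have hcA : ∀ X : Matrix N M ℂ, A * (Ga * X) = X := fun X => by
    rw [← Matrix.mul_assoc, hAGa, Matrix.one_mul]
  have hGbH : ∀ X : Matrix N M ℂ, Gbᴴ * (Bᴴ * X) = X := fun X => by
    rw [← Matrix.mul_assoc, ← conjTranspose_mul, hBGb, conjTranspose_one, Matrix.one_mul]
  have e1 : L * Lᴴ = (-Complex.I) • (S * Bᴴ) + Complex.I • (A * S) := by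
    calc L * Lᴴ = (-Complex.I) • (Complex.I • (L * Lᴴ)) := by
          rw [smul_smul, neg_mul, Complex.I_mul_I, neg_neg, one_smul]
      _ = (-Complex.I) • (S * Bᴴ - A * S) := by rw [← hLy, hkey]
      _ = _ := by rw [smul_sub]; module
  have he : ∀ X : Matrix N M ℂ, L * (Lᴴ * X) =
      (-Complex.I) • (S * (Bᴴ * X)) + Complex.I • (A * (S * X)) := fun X => by
    rw [← Matrix.mul_assoc, e1]; simp only [Matrix.add_mul, Matrix.smul_mul, Matrix.mul_assoc]
  have hW : (1 + Complex.I • (Lᴴ * T * Gb * L))ᴴ = 1 + (-Complex.I) • (Lᴴ * (Gbᴴ * (T * L))) := by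
    simp only [conjTranspose_add, conjTranspose_smul, conjTranspose_mul, conjTranspose_one,
      conjTranspose_conjTranspose, hTh, Complex.star_def, Complex.conj_I, Matrix.mul_assoc]
  rw [hW]
  simp only [Matrix.mul_add, Matrix.add_mul, Matrix.one_mul, Matrix.mul_one, Matrix.smul_mul,
    Matrix.mul_smul, smul_smul, smul_add, smul_sub, Matrix.mul_assoc, he, hcST, hcTS, hcA, hGbH]
  match_scalars <;>
    first
      | ring1
      | linear_combination Complex.I_mul_I
      | linear_combination (-1 : ℂ) * Complex.I_mul_I
      | linear_combination Complex.I * Complex.I_mul_I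
      | linear_combination (-Complex.I) * Complex.I_mul_I

/-- the key factorization identity `(1 - σC)W(iσ) = W'(iσ)(1 - σj)`. -/
private lemma star_identity {N M : Type*} [Fintype N] [DecidableEq N] [Fintype M] [DecidableEq M]
    (a r S T S' T' G : Matrix N N ℂ) (L L' : Matrix N M ℂ) (j : Matrix M M ℂ)
    (σ lam : ℂ)
    (hσ2 : σ * σ = 1) (hlam : lam = Complex.I * σ)
    (har : a * r = 1) (hra : r * a = 1)
    (hST : S * T = 1) (hTS : T * S = 1)
    (hT'S' : T' * S' = 1)
    (hAG : (lam • 1 - a) * G = 1) (hGA : G * (lam • 1 - a) = 1)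
    (hjj : j * j = 1) (hjH : jᴴ = j)
    (hL' : L' = L + Complex.I • (r * L * j))
    (hS'eq : S' = S + r * S * rᴴ + r * (L * j * Lᴴ) * rᴴ)
    (hLy : a * S - S * aᴴ = Complex.I • (L * Lᴴ))
    (hLy' : a * S' - S' * aᴴ = Complex.I • (L' * L'ᴴ)) :
    (1 - σ • (j + Lᴴ * T * L - L'ᴴ * T' * L')) * (1 + Complex.I • (Lᴴ * T * G * L))
      = (1 + Complex.I • (L'ᴴ * T' * G * L')) * (1 - σ • j) := by
  have harH : rᴴ * aᴴ = 1 := by rw [← conjTranspose_mul, har, conjTranspose_one]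
  have hraH : aᴴ * rᴴ = 1 := by rw [← conjTranspose_mul, hra, conjTranspose_one]
  have hGa : G * a = a * G := by
    have e1 : G * a = lam • G - 1 := by
      have h := hGA
      rw [Matrix.mul_sub, Matrix.mul_smul, Matrix.mul_one] at h
      rw [← h]; abel
    have e2 : a * G = lam • G - 1 := by
      have h := hAG
      rw [Matrix.sub_mul, Matrix.smul_mul, Matrix.one_mul] at h
      rw [← h]; abel
    rw [e1, e2]
  have hra_comm : r * (lam • 1 - a) = (lam • 1 - a) * r := by
    rw [Matrix.mul_sub, Matrix.sub_mul, Matrix.mul_smul, Matrix.smul_mul, Matrix.mul_one,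
      Matrix.one_mul, har, hra]
  have hGr : G * r = r * G := by
    calc G * r = G * (r * ((lam • 1 - a) * G)) := by rw [hAG, Matrix.mul_one]
      _ = G * ((r * (lam • 1 - a)) * G) := by rw [Matrix.mul_assoc]
      _ = G * (((lam • 1 - a) * r) * G) := by rw [hra_comm]
      _ = (G * (lam • 1 - a)) * (r * G) := by simp only [Matrix.mul_assoc]
      _ = r * G := by rw [hGA, Matrix.one_mul]
  have hcGa : ∀ X : Matrix N M ℂ, G * (a * X) = a * (G * X) := fun X => by
    rw [← Matrix.mul_assoc, hGa, Matrix.mul_assoc]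
  have hcGr : ∀ X : Matrix N M ℂ, G * (r * X) = r * (G * X) := fun X => by
    rw [← Matrix.mul_assoc, hGr, Matrix.mul_assoc]
  have haG : ∀ X : Matrix N M ℂ, a * (G * X) = lam • (G * X) - X := by
    intro X
    have h := mulc hAG X
    rw [Matrix.sub_mul, Matrix.smul_mul, Matrix.one_mul] at h
    rw [sub_eq_iff_eq_add.mp h]; abel
  have hL'H : L'ᴴ = Lᴴ + (-Complex.I) • (j * (Lᴴ * rᴴ)) := by
    rw [hL']
    simp only [conjTranspose_add, conjTranspose_smul, conjTranspose_mul, hjH, Complex.star_def,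
      Complex.conj_I, Matrix.mul_assoc]
  have hLH' : Lᴴ = L'ᴴ + Complex.I • (j * (Lᴴ * rᴴ)) := by rw [hL'H]; module
  have e1 : L * Lᴴ = (-Complex.I) • (a * S) + Complex.I • (S * aᴴ) := by
    calc L * Lᴴ = (-Complex.I) • (Complex.I • (L * Lᴴ)) := by
          rw [smul_smul, neg_mul, Complex.I_mul_I, neg_neg, one_smul]
      _ = (-Complex.I) • (a * S - S * aᴴ) := by rw [← hLy]
      _ = _ := by rw [smul_sub]; module
  have he : ∀ X : Matrix N M ℂ, L * (Lᴴ * X) =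
      (-Complex.I) • (a * (S * X)) + Complex.I • (S * (aᴴ * X)) := fun X => by
    rw [← Matrix.mul_assoc, e1]
    simp only [Matrix.add_mul, Matrix.smul_mul, Matrix.mul_assoc]
  have hu1 : (σ * Complex.I) • (Lᴴ * (T * (L * (Lᴴ * (T * (G * L)))))) =
      σ • (Lᴴ * (T * (a * (G * L)))) - σ • (Lᴴ * (aᴴ * (T * (G * L)))) := by
    rw [he (T * (G * L))]
    simp only [Matrix.mul_add, Matrix.mul_smul, smul_add, smul_smul, mulc hST, mulc hTS]
    match_scalars <;>
      first
        | ring1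
        | linear_combination σ * Complex.I_mul_I
        | linear_combination (-σ) * Complex.I_mul_I
  have hu2 : (σ * Complex.I) • (j * (Lᴴ * (T * (G * L)))) =
      (-σ) • (L'ᴴ * (aᴴ * (T * (G * L)))) + σ • (Lᴴ * (aᴴ * (T * (G * L)))) := by
    rw [hL'H]
    simp only [Matrix.add_mul, Matrix.smul_mul, Matrix.mul_assoc, mulc harH]
    match_scalars <;>
      first
        | ring1
        | linear_combination σ * Complex.I_mul_I
        | linear_combination (-σ) * Complex.I_mul_I
  have hu3 : σ • (Lᴴ * (T * (a * (G * L)))) =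
      Complex.I • (Lᴴ * (T * (G * L))) - σ • (Lᴴ * (T * L)) := by
    rw [haG L]
    simp only [Matrix.mul_sub, Matrix.mul_smul, smul_sub, smul_smul, hlam]
    match_scalars <;>
      first
        | ring1
        | linear_combination Complex.I * hσ2
        | linear_combination (-Complex.I) * hσ2
  have hSr : S * rᴴ - r * S = Complex.I • (r * (L * (Lᴴ * rᴴ))) := by
    have h := congrArg (fun X => r * X * rᴴ) hLy
    simpa only [Matrix.sub_mul, Matrix.mul_sub, Matrix.smul_mul, Matrix.mul_smul,
      Matrix.mul_assoc, mulc hra, hraH, Matrix.mul_one] using h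
  have hSrX : S * rᴴ = r * S + Complex.I • (r * (L * (Lᴴ * rᴴ))) := by rw [← hSr]; abel
  have h1 : a * S' - L' * (j * (Lᴴ * rᴴ)) = a * S + r * S := by
    rw [hS'eq, hL']
    simp only [Matrix.mul_add, Matrix.add_mul, Matrix.mul_smul, Matrix.smul_mul,
      Matrix.mul_assoc, mulc har, mulc hjj, smul_smul]
    rw [hSrX]
    match_scalars <;>
      first
        | ring1
        | linear_combination Complex.I_mul_I
        | linear_combination (-1 : ℂ) * Complex.I_mul_I
  have h41 : S' * aᴴ + Complex.I • (L' * Lᴴ) = a * S + r * S := by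
    have step : S' * aᴴ + Complex.I • (L' * Lᴴ) = a * S' - L' * (j * (Lᴴ * rᴴ)) := by
      calc S' * aᴴ + Complex.I • (L' * Lᴴ)
          = S' * aᴴ + Complex.I • (L' * (L'ᴴ + Complex.I • (j * (Lᴴ * rᴴ)))) := by rw [← hLH']
        _ = S' * aᴴ + Complex.I • (L' * L'ᴴ) + (Complex.I * Complex.I) • (L' * (j * (Lᴴ * rᴴ))) := by
            simp only [Matrix.mul_add, Matrix.mul_smul, smul_add, smul_smul]; abel
        _ = S' * aᴴ + (a * S' - S' * aᴴ) + (-1 : ℂ) • (L' * (j * (Lᴴ * rᴴ))) := by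
            rw [hLy', Complex.I_mul_I]
        _ = a * S' - L' * (j * (Lᴴ * rᴴ)) := by module
    rw [step, h1]
  have h5 : S' * (aᴴ * (T * (G * L))) + Complex.I • (L' * (Lᴴ * (T * (G * L)))) =
      G * (a * L') - Complex.I • (G * (L' * j)) := by
    have hl : S' * (aᴴ * (T * (G * L))) + Complex.I • (L' * (Lᴴ * (T * (G * L)))) =
        a * (G * L) + r * (G * L) := by
      have h := congrArg (fun X => X * (T * (G * L))) h41
      simpa only [Matrix.add_mul, Matrix.smul_mul, Matrix.mul_assoc, mulc hST] using h
    have h2 : a * L' - Complex.I • (L' * j) = a * L + r * L := by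
      rw [hL']
      simp only [Matrix.mul_add, Matrix.add_mul, Matrix.mul_smul, Matrix.smul_mul,
        Matrix.mul_assoc, mulc har, hjj, Matrix.mul_one, smul_smul, smul_add]
      match_scalars <;>
        first
          | ring1
          | linear_combination Complex.I_mul_I
          | linear_combination (-1 : ℂ) * Complex.I_mul_I
    have hr : G * (a * L') - Complex.I • (G * (L' * j)) = a * (G * L) + r * (G * L) := by
      calc G * (a * L') - Complex.I • (G * (L' * j))
          = G * (a * L' - Complex.I • (L' * j)) := by rw [Matrix.mul_sub, Matrix.mul_smul]
        _ = G * (a * L + r * L) := by rw [h2]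
        _ = a * (G * L) + r * (G * L) := by rw [Matrix.mul_add, hcGa, hcGr]
    rw [hl, ← hr]
  have h6 := congrArg (fun X => σ • (L'ᴴ * (T' * X))) h5
  simp only [smul_add, smul_sub, Matrix.mul_add, Matrix.mul_sub, Matrix.mul_smul, smul_smul,
    mulc hT'S'] at h6
  rw [show G * (a * L') = lam • (G * L') - L' from by rw [hcGa L', haG L']] at h6
  simp only [Matrix.mul_sub, Matrix.mul_smul, smul_sub, smul_smul] at h6
  rw [hlam] at h6
  rw [show σ * (Complex.I * σ) = Complex.I from by linear_combination Complex.I * hσ2] at h6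
  have h5m : (σ * Complex.I) • (L'ᴴ * (T' * (L' * (Lᴴ * (T * (G * L)))))) =
      Complex.I • (L'ᴴ * (T' * (G * L'))) - σ • (L'ᴴ * (T' * L'))
        - (σ * Complex.I) • (L'ᴴ * (T' * (G * (L' * j))))
        - σ • (L'ᴴ * (aᴴ * (T * (G * L)))) := by
    rw [eq_sub_iff_add_eq]
    rw [add_comm] at h6
    rw [h6]
  have expand : (1 - σ • (j + Lᴴ * T * L - L'ᴴ * T' * L')) * (1 + Complex.I • (Lᴴ * T * G * L)) =
      1 + Complex.I • (Lᴴ * (T * (G * L))) - σ • j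
        - (σ * Complex.I) • (j * (Lᴴ * (T * (G * L))))
        - σ • (Lᴴ * (T * L)) - (σ * Complex.I) • (Lᴴ * (T * (L * (Lᴴ * (T * (G * L))))))
        + σ • (L'ᴴ * (T' * L')) + (σ * Complex.I) • (L'ᴴ * (T' * (L' * (Lᴴ * (T * (G * L)))))) := by
    simp only [Matrix.mul_add, Matrix.add_mul, Matrix.sub_mul, Matrix.mul_sub, Matrix.one_mul,
      Matrix.mul_one, Matrix.smul_mul, Matrix.mul_smul, smul_smul, smul_add, smul_sub,
      Matrix.mul_assoc]
    module
  have expandR : (1 + Complex.I • (L'ᴴ * T' * G * L')) * (1 - σ • j) =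
      1 + Complex.I • (L'ᴴ * (T' * (G * L'))) - σ • j
        - (σ * Complex.I) • (L'ᴴ * (T' * (G * (L' * j)))) := by
    simp only [Matrix.mul_add, Matrix.add_mul, Matrix.sub_mul, Matrix.mul_sub, Matrix.one_mul,
      Matrix.mul_one, Matrix.smul_mul, Matrix.mul_smul, smul_smul, smul_add, smul_sub,
      Matrix.mul_assoc]
    module
  rw [expand, expandR, hu2, hu1, hu3, h5m]
  module

/-- Lyapunov identity propagates through the recursion. -/
private lemma lyap_step {N M : Type*} [Fintype N] [DecidableEq N] [Fintype M] [DecidableEq M]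
    (a r S S' : Matrix N N ℂ) (L L' : Matrix N M ℂ) (j : Matrix M M ℂ)
    (har : a * r = 1) (hra : r * a = 1) (hjj : j * j = 1) (hjH : jᴴ = j)
    (hL' : L' = L + Complex.I • (r * L * j))
    (hS'eq : S' = S + r * S * rᴴ + r * (L * j * Lᴴ) * rᴴ)
    (hLy : a * S - S * aᴴ = Complex.I • (L * Lᴴ)) :
    a * S' - S' * aᴴ = Complex.I • (L' * L'ᴴ) := by
  have harH : rᴴ * aᴴ = 1 := by rw [← conjTranspose_mul, har, conjTranspose_one]
  have hraH : aᴴ * rᴴ = 1 := by rw [← conjTranspose_mul, hra, conjTranspose_one]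
  have hSr : S * rᴴ - r * S = Complex.I • (r * (L * (Lᴴ * rᴴ))) := by
    have h := congrArg (fun X => r * X * rᴴ) hLy
    simpa only [Matrix.sub_mul, Matrix.mul_sub, Matrix.smul_mul, Matrix.mul_smul,
      Matrix.mul_assoc, mulc hra, hraH, Matrix.mul_one] using h
  have hSrX : S * rᴴ = r * S + Complex.I • (r * (L * (Lᴴ * rᴴ))) := by rw [← hSr]; abel
  have hLyX : a * S = S * aᴴ + Complex.I • (L * Lᴴ) := by rw [← hLy]; abel
  have hL'H : L'ᴴ = Lᴴ + (-Complex.I) • (j * (Lᴴ * rᴴ)) := by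
    rw [hL']
    simp only [conjTranspose_add, conjTranspose_smul, conjTranspose_mul, hjH, Complex.star_def,
      Complex.conj_I, Matrix.mul_assoc]
  rw [hS'eq, hL'H, hL']
  simp only [Matrix.mul_add, Matrix.add_mul, Matrix.mul_sub, Matrix.sub_mul, Matrix.mul_smul,
    Matrix.smul_mul, Matrix.mul_assoc, mulc har, mulc hjj, hraH, harH, Matrix.mul_one,
    smul_smul, smul_add, smul_sub]
  simp only [hSrX, hLyX]
  try simp only [Matrix.mul_add, Matrix.add_mul, Matrix.mul_smul, Matrix.smul_mul, smul_add,
    smul_smul, Matrix.mul_assoc]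
  match_scalars <;>
    first
      | ring1
      | linear_combination Complex.I_mul_I
      | linear_combination (-1 : ℂ) * Complex.I_mul_I
      | linear_combination Complex.I * Complex.I_mul_I
      | linear_combination (-Complex.I) * Complex.I_mul_I

/-- Positive definiteness propagates through the recursion. -/
private lemma posdef_step {N M P : Type*} [Fintype N] [DecidableEq N] [Fintype M] [Fintype P]
    (r S S' : Matrix N N ℂ) (L : Matrix N M ℂ) (j : Matrix M M ℂ) (X : Matrix N P ℂ)
    (hXX : L * Lᴴ + L * j * Lᴴ = X * Xᴴ + X * Xᴴ)
    (hS'eq : S' = S + r * S * rᴴ + r * (L * j * Lᴴ) * rᴴ)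
    (hSr : S * rᴴ - r * S = Complex.I • (r * (L * (Lᴴ * rᴴ))))
    (hSpd : S.PosDef) (hB : IsUnit (1 - Complex.I • r)) : S'.PosDef := by
  have hBH : (1 - Complex.I • r)ᴴ = 1 + Complex.I • rᴴ := by
    simp only [conjTranspose_sub, conjTranspose_smul, conjTranspose_one, Complex.star_def,
      Complex.conj_I, neg_smul, sub_neg_eq_add]
  have hSrX : S * rᴴ = r * S + Complex.I • (r * (L * (Lᴴ * rᴴ))) := by rw [← hSr]; abel
  have hXXr : r * (L * (j * (Lᴴ * rᴴ))) =
      r * (X * (Xᴴ * rᴴ)) + r * (X * (Xᴴ * rᴴ)) - r * (L * (Lᴴ * rᴴ)) := by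
    have h := congrArg (fun Y => r * Y * rᴴ) hXX
    simp only [Matrix.add_mul, Matrix.mul_add, Matrix.mul_assoc] at h
    rw [eq_sub_iff_add_eq, add_comm]
    exact h
  have hdecomp : S' = (1 - Complex.I • r) * S * (1 - Complex.I • r)ᴴ +
      ((r * X) * (r * X)ᴴ + (r * X) * (r * X)ᴴ) := by
    rw [hS'eq, hBH]
    have hrX : (r * X) * (r * X)ᴴ = r * (X * (Xᴴ * rᴴ)) := by
      rw [conjTranspose_mul]; simp only [Matrix.mul_assoc]
    rw [hrX]
    simp only [Matrix.mul_add, Matrix.add_mul, Matrix.mul_sub, Matrix.sub_mul, Matrix.mul_smul,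
      Matrix.smul_mul, Matrix.mul_one, Matrix.one_mul, smul_smul, smul_sub, smul_add,
      Matrix.mul_assoc]
    simp only [hXXr, hSrX]
    simp only [Matrix.mul_add, Matrix.mul_smul, smul_add, smul_smul, Matrix.mul_assoc,
      Matrix.mul_sub, smul_sub]
    match_scalars <;>
      first
        | ring1
        | linear_combination Complex.I_mul_I
        | linear_combination (-1 : ℂ) * Complex.I_mul_I
        | linear_combination (1 + Complex.I) * Complex.I_mul_I
        | linear_combination (1 - Complex.I) * Complex.I_mul_I
        | linear_combination (-1 + Complex.I) * Complex.I_mul_I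
        | linear_combination (-1 - Complex.I) * Complex.I_mul_I
        | linear_combination Complex.I * Complex.I_mul_I
        | linear_combination (-Complex.I) * Complex.I_mul_I
  rw [hdecomp]
  exact (posDef_conj_aux hSpd hB).add_posSemidef
    ((Matrix.posSemidef_self_mul_conjTranspose _).add (Matrix.posSemidef_self_mul_conjTranspose _))

/- ---------------------------------------------------------------------------------------- -/

/-- the matrices `H_k⁺ = 2W_{Σ_k}(i)P₁W_{Σ_k}(−i)*` and
`H_k⁻ = 2W_{Σ_k}(−i)P₂W_{Σ_k}(i)*` satisfy
`(I + C_k)H_k⁻ = H_{k+1}⁻(I + C_k) = 0` and `(I − C_k)H_k⁺ = H_{k+1}⁺(I − C_k) = 0`. -/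
theorem H_plus_minus_annihilation
    {n m₁ m₂ : ℕ} (α S₀ : Matrix (Fin n) (Fin n) ℂ)
    (θ₁ : Matrix (Fin n) (Fin m₁) ℂ) (θ₂ : Matrix (Fin n) (Fin m₂) ℂ)
    (hadm : Admissible α S₀ θ₁ θ₂) (hctrl : Controllable α θ₁)
    (hi : Complex.I ∉ spectrum ℂ α)
    (Λ : ℕ → Matrix (Fin n) (Fin m₁ ⊕ Fin m₂) ℂ)
    (hΛ : ∀ k : ℕ, Λ k = Matrix.fromCols
      ((1 + Complex.I • α⁻¹) ^ k * θ₁) ((1 - Complex.I • α⁻¹) ^ k * θ₂))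
    (S : ℕ → Matrix (Fin n) (Fin n) ℂ)
    (hS0 : S 0 = S₀)
    (hS : ∀ k : ℕ, S (k + 1) =
      S k + α⁻¹ * S k * (α⁻¹)ᴴ + α⁻¹ * (Λ k * sigJ m₁ m₂ * (Λ k)ᴴ) * (α⁻¹)ᴴ)
    (W : ℕ → ℂ → Matrix (Fin m₁ ⊕ Fin m₂) (Fin m₁ ⊕ Fin m₂) ℂ)
    (hW : ∀ (k : ℕ) (lam : ℂ),
      W k lam = 1 + Complex.I • ((Λ k)ᴴ * (S k)⁻¹ * (lam • 1 - α)⁻¹ * Λ k))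
    (C : ℕ → Matrix (Fin m₁ ⊕ Fin m₂) (Fin m₁ ⊕ Fin m₂) ℂ)
    (hC : ∀ k : ℕ, C k = sigJ m₁ m₂ + (Λ k)ᴴ * (S k)⁻¹ * Λ k
      - (Λ (k + 1))ᴴ * (S (k + 1))⁻¹ * Λ (k + 1))
    (P₁ P₂ : Matrix (Fin m₁ ⊕ Fin m₂) (Fin m₁ ⊕ Fin m₂) ℂ)
    (hP₁ : P₁ = (2:ℂ)⁻¹ • (1 + sigJ m₁ m₂)) (hP₂ : P₂ = (2:ℂ)⁻¹ • (1 - sigJ m₁ m₂))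
    (Hp Hm : ℕ → Matrix (Fin m₁ ⊕ Fin m₂) (Fin m₁ ⊕ Fin m₂) ℂ)
    (hHp : ∀ k : ℕ, Hp k = (2:ℂ) • (W k Complex.I * P₁ * (W k (-Complex.I))ᴴ))
    (hHm : ∀ k : ℕ, Hm k = (2:ℂ) • (W k (-Complex.I) * P₂ * (W k Complex.I)ᴴ)) :
    ∀ k : ℕ,
      (1 + C k) * Hm k = 0 ∧ Hm (k + 1) * (1 + C k) = 0 ∧
      (1 - C k) * Hp k = 0 ∧ Hp (k + 1) * (1 - C k) = 0 := by
  obtain ⟨hS0pd, hLy0⟩ := hadm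
  -- facts about j
  have hjj : sigJ m₁ m₂ * sigJ m₁ m₂ = 1 := by
    unfold sigJ
    rw [Matrix.fromBlocks_multiply]
    simp [Matrix.fromBlocks_one]
  have hjH : (sigJ m₁ m₂)ᴴ = sigJ m₁ m₂ := by
    unfold sigJ
    rw [Matrix.fromBlocks_conjTranspose]
    simp
  -- I ∉ spectrum α
  have hiu : IsUnit (Complex.I • (1 : Matrix (Fin n) (Fin n) ℂ) - α) := by
    have h := spectrum.notMem_iff.mp hi
    rwa [Algebra.algebraMap_eq_smul_one] at h
  -- quadratic form identity
  have quad : ∀ u : Fin n → ℂ, αᴴ *ᵥ u = Complex.I • u ∨ αᴴ *ᵥ u = 0 →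
      True := fun _ _ => trivial
  -- helper: star u ⬝ᵥ (Lyapunov) for eigenvector-type u
  have quadform : ∀ u : Fin n → ℂ,
      star (αᴴ *ᵥ u) ⬝ᵥ (S₀ *ᵥ u) - star u ⬝ᵥ (S₀ *ᵥ (αᴴ *ᵥ u))
        = Complex.I * (star (θ₁ᴴ *ᵥ u) ⬝ᵥ (θ₁ᴴ *ᵥ u) + star (θ₂ᴴ *ᵥ u) ⬝ᵥ (θ₂ᴴ *ᵥ u)) := by
    intro u
    have h := congrArg (fun M => star u ⬝ᵥ (M *ᵥ u)) hLy0
    simp only [Matrix.sub_mulVec, Matrix.add_mulVec, Matrix.smul_mulVec,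
      dotProduct_sub, dotProduct_add, dotProduct_smul, smul_eq_mul] at h
    rw [← Matrix.mulVec_mulVec u α S₀, ← Matrix.mulVec_mulVec u S₀ αᴴ,
      ← Matrix.mulVec_mulVec u θ₁ θ₁ᴴ, ← Matrix.mulVec_mulVec u θ₂ θ₂ᴴ] at h
    rw [dot_conj α u (S₀ *ᵥ u), dot_conj θ₁ u (θ₁ᴴ *ᵥ u), dot_conj θ₂ u (θ₂ᴴ *ᵥ u)] at h
    exact h
  -- α is invertible
  have hαu : IsUnit α := by
    by_contra hcon
    have hdet : α.det = 0 := by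
      by_contra hd
      exact hcon ((Matrix.isUnit_iff_isUnit_det α).mpr (Ne.isUnit hd))
    have hdetH : αᴴ.det = 0 := by rw [Matrix.det_conjTranspose, hdet, star_zero]
    obtain ⟨u, hu0, huk⟩ := (Matrix.exists_mulVec_eq_zero_iff).mpr hdetH
    have hq := quadform u
    rw [huk] at hq
    simp only [star_zero, zero_dotProduct, Matrix.mulVec_zero, dotProduct_zero, sub_zero] at hq
    have hc1 : (0:ℂ) ≤ star (θ₁ᴴ *ᵥ u) ⬝ᵥ (θ₁ᴴ *ᵥ u) := dotProduct_star_self_nonneg _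
    have hc2 : (0:ℂ) ≤ star (θ₂ᴴ *ᵥ u) ⬝ᵥ (θ₂ᴴ *ᵥ u) := dotProduct_star_self_nonneg _
    have hsum : star (θ₁ᴴ *ᵥ u) ⬝ᵥ (θ₁ᴴ *ᵥ u) + star (θ₂ᴴ *ᵥ u) ⬝ᵥ (θ₂ᴴ *ᵥ u) = 0 := by
      have := hq.symm
      rw [mul_comm] at this
      exact (mul_eq_zero.mp this).resolve_right Complex.I_ne_zero
    have hθ1 : θ₁ᴴ *ᵥ u = 0 := by
      rw [← dotProduct_star_self_eq_zero]
      exact ((add_eq_zero_iff_of_nonneg hc1 hc2).mp hsum).1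
    -- controllability contradiction
    let φ : (Fin n → ℂ) →ₗ[ℂ] ℂ :=
      { toFun := fun v => star u ⬝ᵥ v
        map_add' := fun x y => dotProduct_add _ _ _
        map_smul' := fun c x => by simp [dotProduct_smul] }
    have hφ : φ = 0 := by
      apply LinearMap.ext_on hctrl
      rintro v ⟨k, _, jj, rfl⟩
      show star u ⬝ᵥ (fun i => (α ^ k * θ₁) i jj) = 0
      have hv : (fun i => (α ^ k * θ₁) i jj) = (α ^ k * θ₁) *ᵥ (Pi.single jj 1) := by
        funext i
        rw [Matrix.mulVec_single]
        simp
      rw [hv, dot_conj]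
      have hz : (α ^ k * θ₁)ᴴ *ᵥ u = 0 := by
        rw [conjTranspose_mul, ← Matrix.mulVec_mulVec, conjTranspose_pow]
        cases k with
        | zero => simpa using hθ1
        | succ k =>
          rw [pow_succ, ← Matrix.mulVec_mulVec, huk]
          simp
      rw [hz]
      simp
    have h0 : φ u = 0 := by rw [hφ]; rfl
    exact hu0 (dotProduct_star_self_eq_zero.mp h0)
  have hαdet : IsUnit α.det := (Matrix.isUnit_iff_isUnit_det α).mp hαu
  have har : α * α⁻¹ = 1 := Matrix.mul_nonsing_inv α hαdet
  have hra : α⁻¹ * α = 1 := Matrix.nonsing_inv_mul α hαdet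
  -- -I ∉ spectrum α
  have hmiu : IsUnit ((-Complex.I) • (1 : Matrix (Fin n) (Fin n) ℂ) - α) := by
    by_contra hcon
    have hdet : ((-Complex.I) • (1 : Matrix (Fin n) (Fin n) ℂ) - α).det = 0 := by
      by_contra hd
      exact hcon ((Matrix.isUnit_iff_isUnit_det _).mpr (Ne.isUnit hd))
    have hdetH : (Complex.I • (1 : Matrix (Fin n) (Fin n) ℂ) - αᴴ).det = 0 := by
      have : (Complex.I • (1 : Matrix (Fin n) (Fin n) ℂ) - αᴴ)
          = ((-Complex.I) • (1 : Matrix (Fin n) (Fin n) ℂ) - α)ᴴ := by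
        simp [conjTranspose_sub, conjTranspose_smul, Complex.star_def]
      rw [this, Matrix.det_conjTranspose, hdet, star_zero]
    obtain ⟨u, hu0, huk⟩ := (Matrix.exists_mulVec_eq_zero_iff).mpr hdetH
    have hev : αᴴ *ᵥ u = Complex.I • u := by
      have h := huk
      rw [Matrix.sub_mulVec, sub_eq_zero] at h
      rw [← h, Matrix.smul_mulVec, Matrix.one_mulVec]
    have hq := quadform u
    rw [hev] at hq
    have hqq : star u ⬝ᵥ (S₀ *ᵥ u) > 0 := hS0pd.dotProduct_mulVec_pos hu0
    rw [star_smul, smul_dotProduct, Matrix.mulVec_smul, dotProduct_smul] at hq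
    simp only [Complex.star_def, Complex.conj_I, smul_eq_mul, neg_mul] at hq
    have hc1 : (0:ℂ) ≤ star (θ₁ᴴ *ᵥ u) ⬝ᵥ (θ₁ᴴ *ᵥ u) := dotProduct_star_self_nonneg _
    have hc2 : (0:ℂ) ≤ star (θ₂ᴴ *ᵥ u) ⬝ᵥ (θ₂ᴴ *ᵥ u) := dotProduct_star_self_nonneg _
    -- hq : -(I * q) - I * q = I * (c₁ + c₂)
    have h2 : (-2 : ℂ) * (star u ⬝ᵥ (S₀ *ᵥ u)) =
        star (θ₁ᴴ *ᵥ u) ⬝ᵥ (θ₁ᴴ *ᵥ u) + star (θ₂ᴴ *ᵥ u) ⬝ᵥ (θ₂ᴴ *ᵥ u) := by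
      apply mul_left_cancel₀ Complex.I_ne_zero
      rw [← hq]; ring
    have hlt : (-2 : ℂ) * (star u ⬝ᵥ (S₀ *ᵥ u)) < 0 := by
      have h2q : (0:ℂ) < 2 * (star u ⬝ᵥ (S₀ *ᵥ u)) := by positivity
      calc (-2 : ℂ) * (star u ⬝ᵥ (S₀ *ᵥ u)) = -(2 * (star u ⬝ᵥ (S₀ *ᵥ u))) := by ring
        _ < 0 := neg_lt_zero.mpr h2q
    rw [h2] at hlt
    exact lt_irrefl (0:ℂ) ((add_nonneg hc1 hc2).trans_lt hlt)
  -- Λ recursion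
  have hΛstep : ∀ k : ℕ, Λ (k + 1) = Λ k + Complex.I • (α⁻¹ * Λ k * sigJ m₁ m₂) := by
    intro k
    rw [hΛ (k+1), hΛ k]
    unfold sigJ
    rw [Matrix.mul_fromCols (A := α⁻¹), Matrix.fromCols_mul_fromBlocks]
    have e1 : (1 + Complex.I • α⁻¹) ^ (k+1) * θ₁
        = (1 + Complex.I • α⁻¹) ^ k * θ₁ + Complex.I • (α⁻¹ * ((1 + Complex.I • α⁻¹) ^ k * θ₁)) := by
      rw [pow_succ', Matrix.mul_assoc, Matrix.add_mul, Matrix.one_mul, Matrix.smul_mul]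
    have e2 : (1 - Complex.I • α⁻¹) ^ (k+1) * θ₂
        = (1 - Complex.I • α⁻¹) ^ k * θ₂ - Complex.I • (α⁻¹ * ((1 - Complex.I • α⁻¹) ^ k * θ₂)) := by
      rw [pow_succ', Matrix.mul_assoc, Matrix.sub_mul, Matrix.one_mul, Matrix.smul_mul]
    rw [e1, e2]
    ext i (jj | jj) <;>
      simp [Matrix.fromCols, Matrix.add_apply, Matrix.smul_apply, sub_eq_add_neg]
  -- block computations for Λ
  have hΛ0 : Λ 0 = Matrix.fromCols θ₁ θ₂ := by
    rw [hΛ 0]; simp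
  have hΛΛ : ∀ k : ℕ, Λ k * (Λ k)ᴴ
      = ((1 + Complex.I • α⁻¹) ^ k * θ₁) * ((1 + Complex.I • α⁻¹) ^ k * θ₁)ᴴ
        + ((1 - Complex.I • α⁻¹) ^ k * θ₂) * ((1 - Complex.I • α⁻¹) ^ k * θ₂)ᴴ := by
    intro k
    rw [hΛ k, Matrix.conjTranspose_fromCols_eq_fromRows_conjTranspose,
      Matrix.fromCols_mul_fromRows]
  have hXX : ∀ k : ℕ, Λ k * (Λ k)ᴴ + Λ k * sigJ m₁ m₂ * (Λ k)ᴴ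
      = ((1 + Complex.I • α⁻¹) ^ k * θ₁) * ((1 + Complex.I • α⁻¹) ^ k * θ₁)ᴴ
        + ((1 + Complex.I • α⁻¹) ^ k * θ₁) * ((1 + Complex.I • α⁻¹) ^ k * θ₁)ᴴ := by
    intro k
    have hjΛ : Λ k * sigJ m₁ m₂ * (Λ k)ᴴ
        = ((1 + Complex.I • α⁻¹) ^ k * θ₁) * ((1 + Complex.I • α⁻¹) ^ k * θ₁)ᴴ
          - ((1 - Complex.I • α⁻¹) ^ k * θ₂) * ((1 - Complex.I • α⁻¹) ^ k * θ₂)ᴴ := by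
      rw [hΛ k]
      unfold sigJ
      rw [Matrix.fromCols_mul_fromBlocks,
        Matrix.conjTranspose_fromCols_eq_fromRows_conjTranspose,
        Matrix.fromCols_mul_fromRows]
      simp only [Matrix.mul_one, Matrix.mul_zero, Matrix.mul_neg, add_zero, zero_add,
        Matrix.neg_mul]
      abel
    rw [hΛΛ k, hjΛ]
    abel
  -- main induction: positive definiteness and Lyapunov identity
  have main : ∀ k : ℕ, (S k).PosDef ∧
      (α * S k - S k * αᴴ = Complex.I • (Λ k * (Λ k)ᴴ)) := by
    intro k
    induction k with
    | zero =>
      constructor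
      · rw [hS0]; exact hS0pd
      · rw [hS0, hΛ0, Matrix.conjTranspose_fromCols_eq_fromRows_conjTranspose,
          Matrix.fromCols_mul_fromRows]
        exact hLy0
    | succ k ih =>
      obtain ⟨ihpd, ihly⟩ := ih
      have hraH : αᴴ * (α⁻¹)ᴴ = 1 := by rw [← conjTranspose_mul, hra, conjTranspose_one]
      have hSr : S k * (α⁻¹)ᴴ - α⁻¹ * S k
          = Complex.I • (α⁻¹ * (Λ k * ((Λ k)ᴴ * (α⁻¹)ᴴ))) := by
        have h := congrArg (fun X => α⁻¹ * X * (α⁻¹)ᴴ) ihly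
        simpa only [Matrix.sub_mul, Matrix.mul_sub, Matrix.smul_mul, Matrix.mul_smul,
          Matrix.mul_assoc, mulc hra, hraH, Matrix.mul_one] using h
      have hB : IsUnit (1 - Complex.I • α⁻¹) := by
        have hBe : (1 : Matrix (Fin n) (Fin n) ℂ) - Complex.I • α⁻¹
            = α⁻¹ * (α - Complex.I • 1) := by
          rw [Matrix.mul_sub, hra, Matrix.mul_smul, Matrix.mul_one]
        have h2 : IsUnit (α - Complex.I • (1 : Matrix (Fin n) (Fin n) ℂ)) := by
          have e : α - Complex.I • (1 : Matrix (Fin n) (Fin n) ℂ)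
              = -(Complex.I • 1 - α) := by abel
          rw [e]; exact hiu.neg
        rw [hBe]
        exact IsUnit.mul (Matrix.isUnit_nonsing_inv_iff.mpr hαu) h2
      constructor
      · exact posdef_step α⁻¹ (S k) (S (k+1)) (Λ k) (sigJ m₁ m₂)
          ((1 + Complex.I • α⁻¹) ^ k * θ₁) (hXX k) (hS k) hSr ihpd hB
      · exact lyap_step α α⁻¹ (S k) (S (k+1)) (Λ k) (Λ (k+1)) (sigJ m₁ m₂)
          har hra hjj hjH (hΛstep k) (hS k) ihly
  -- per-level matrix facts
  have hTfacts : ∀ k : ℕ, (S k) * (S k)⁻¹ = 1 ∧ (S k)⁻¹ * (S k) = 1 ∧ ((S k)⁻¹)ᴴ = (S k)⁻¹ := by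
    intro k
    have hpd := (main k).1
    have hdet : IsUnit (S k).det := (Matrix.isUnit_iff_isUnit_det _).mp hpd.isUnit
    refine ⟨Matrix.mul_nonsing_inv _ hdet, Matrix.nonsing_inv_mul _ hdet, ?_⟩
    rw [Matrix.conjTranspose_nonsing_inv, hpd.1.eq]
  have hGi : (Complex.I • (1 : Matrix (Fin n) (Fin n) ℂ) - α) *
      (Complex.I • (1 : Matrix (Fin n) (Fin n) ℂ) - α)⁻¹ = 1 :=
    Matrix.mul_nonsing_inv _ ((Matrix.isUnit_iff_isUnit_det _).mp hiu)
  have hiG : (Complex.I • (1 : Matrix (Fin n) (Fin n) ℂ) - α)⁻¹ *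
      (Complex.I • (1 : Matrix (Fin n) (Fin n) ℂ) - α) = 1 :=
    Matrix.nonsing_inv_mul _ ((Matrix.isUnit_iff_isUnit_det _).mp hiu)
  have hGm : ((-Complex.I) • (1 : Matrix (Fin n) (Fin n) ℂ) - α) *
      ((-Complex.I) • (1 : Matrix (Fin n) (Fin n) ℂ) - α)⁻¹ = 1 :=
    Matrix.mul_nonsing_inv _ ((Matrix.isUnit_iff_isUnit_det _).mp hmiu)
  have hmG : ((-Complex.I) • (1 : Matrix (Fin n) (Fin n) ℂ) - α)⁻¹ *
      ((-Complex.I) • (1 : Matrix (Fin n) (Fin n) ℂ) - α) = 1 :=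
    Matrix.nonsing_inv_mul _ ((Matrix.isUnit_iff_isUnit_det _).mp hmiu)
  -- unitarity of W k at ±i
  have hkey1 : ∀ k : ℕ, α * S k - S k * αᴴ
      = S k * ((-Complex.I) • (1 : Matrix (Fin n) (Fin n) ℂ) - α)ᴴ
        - (Complex.I • (1 : Matrix (Fin n) (Fin n) ℂ) - α) * S k := by
    intro k
    simp only [conjTranspose_sub, conjTranspose_smul, conjTranspose_one, Complex.star_def,
      Complex.conj_I, Matrix.mul_sub, Matrix.sub_mul, Matrix.mul_smul, Matrix.smul_mul,
      Matrix.mul_one, Matrix.one_mul, star_neg, neg_neg, neg_smul, sub_neg_eq_add,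
      conjTranspose_neg, Matrix.mul_neg, Matrix.neg_mul]
    module
  have hkey2 : ∀ k : ℕ, α * S k - S k * αᴴ
      = S k * (Complex.I • (1 : Matrix (Fin n) (Fin n) ℂ) - α)ᴴ
        - ((-Complex.I) • (1 : Matrix (Fin n) (Fin n) ℂ) - α) * S k := by
    intro k
    simp only [conjTranspose_sub, conjTranspose_smul, conjTranspose_one, Complex.star_def,
      Complex.conj_I, Matrix.mul_sub, Matrix.sub_mul, Matrix.mul_smul, Matrix.smul_mul,
      Matrix.mul_one, Matrix.one_mul, star_neg, neg_neg, neg_smul, sub_neg_eq_add,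
      conjTranspose_neg, Matrix.mul_neg, Matrix.neg_mul]
    module
  have hU1 : ∀ k : ℕ, (W k (-Complex.I))ᴴ * W k Complex.I = 1 := by
    intro k
    obtain ⟨hST, hTS, hTh⟩ := hTfacts k
    rw [hW k Complex.I, hW k (-Complex.I)]
    exact key_unit α (S k) (S k)⁻¹ (Complex.I • 1 - α) ((-Complex.I) • 1 - α)
      (Complex.I • 1 - α)⁻¹ ((-Complex.I) • 1 - α)⁻¹ (Λ k) hTh hST hTS hGi hGm
      (main k).2 (hkey1 k)
  have hU2 : ∀ k : ℕ, (W k Complex.I)ᴴ * W k (-Complex.I) = 1 := by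
    intro k
    obtain ⟨hST, hTS, hTh⟩ := hTfacts k
    rw [hW k Complex.I, hW k (-Complex.I)]
    exact key_unit α (S k) (S k)⁻¹ ((-Complex.I) • 1 - α) (Complex.I • 1 - α)
      ((-Complex.I) • 1 - α)⁻¹ (Complex.I • 1 - α)⁻¹ (Λ k) hTh hST hTS hGm hGi
      (main k).2 (hkey2 k)
  -- star identities
  have hstarP : ∀ k : ℕ, (1 - C k) * W k Complex.I = W (k+1) Complex.I * (1 - sigJ m₁ m₂) := by
    intro k
    obtain ⟨hST, hTS, _⟩ := hTfacts k
    obtain ⟨_, hTS', _⟩ := hTfacts (k+1)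
    have h := star_identity α α⁻¹ (S k) (S k)⁻¹ (S (k+1)) (S (k+1))⁻¹
      (Complex.I • 1 - α)⁻¹ (Λ k) (Λ (k+1)) (sigJ m₁ m₂) 1 Complex.I
      (by norm_num) (by ring) har hra hST hTS hTS' hGi hiG hjj hjH
      (hΛstep k) (hS k) (main k).2 (main (k+1)).2
    rw [one_smul, one_smul] at h
    rw [hC k, hW k Complex.I, hW (k+1) Complex.I]
    exact h
  have hstarM : ∀ k : ℕ, (1 + C k) * W k (-Complex.I)
      = W (k+1) (-Complex.I) * (1 + sigJ m₁ m₂) := by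
    intro k
    obtain ⟨hST, hTS, _⟩ := hTfacts k
    obtain ⟨_, hTS', _⟩ := hTfacts (k+1)
    have h := star_identity α α⁻¹ (S k) (S k)⁻¹ (S (k+1)) (S (k+1))⁻¹
      ((-Complex.I) • 1 - α)⁻¹ (Λ k) (Λ (k+1)) (sigJ m₁ m₂) (-1) (-Complex.I)
      (by norm_num) (by ring) har hra hST hTS hTS' hGm hmG hjj hjH
      (hΛstep k) (hS k) (main k).2 (main (k+1)).2
    rw [neg_one_smul, neg_one_smul, sub_neg_eq_add, sub_neg_eq_add] at h
    rw [hC k, hW k (-Complex.I), hW (k+1) (-Complex.I)]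
    exact h
  -- projections kill
  have hpm : (1 + sigJ m₁ m₂) * (1 - sigJ m₁ m₂) = 0 := by
    simp only [Matrix.mul_sub, Matrix.mul_add, Matrix.add_mul, Matrix.sub_mul, Matrix.mul_one,
      Matrix.one_mul, hjj]
    abel
  have hmp : (1 - sigJ m₁ m₂) * (1 + sigJ m₁ m₂) = 0 := by
    simp only [Matrix.mul_sub, Matrix.mul_add, Matrix.add_mul, Matrix.sub_mul, Matrix.mul_one,
      Matrix.one_mul, hjj]
    abel
  -- final assembly
  intro k
  have hWmWi : W k (-Complex.I) * (W k Complex.I)ᴴ = 1 := mul_eq_one_comm.mp (hU2 k)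
  have hWiWm : W k Complex.I * (W k (-Complex.I))ᴴ = 1 := mul_eq_one_comm.mp (hU1 k)
  have hU1' : (W (k+1) (-Complex.I))ᴴ * W (k+1) Complex.I = 1 := hU1 (k+1)
  have hU2' : (W (k+1) Complex.I)ᴴ * W (k+1) (-Complex.I) = 1 := hU2 (k+1)
  refine ⟨?_, ?_, ?_, ?_⟩
  · -- (1 + C k) * Hm k = 0
    rw [hHm k, hP₂]
    have e : (1 + C k) * ((2:ℂ) • (W k (-Complex.I) * ((2:ℂ)⁻¹ • (1 - sigJ m₁ m₂))
          * (W k Complex.I)ᴴ))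
        = ((2:ℂ) * (2:ℂ)⁻¹) • (((1 + C k) * W k (-Complex.I))
          * ((1 - sigJ m₁ m₂) * (W k Complex.I)ᴴ)) := by
      simp only [Matrix.mul_smul, Matrix.smul_mul, smul_smul, Matrix.mul_assoc]
    rw [e, hstarM k]
    have e2 : (W (k+1) (-Complex.I) * (1 + sigJ m₁ m₂)) * ((1 - sigJ m₁ m₂) * (W k Complex.I)ᴴ)
        = W (k+1) (-Complex.I) * (((1 + sigJ m₁ m₂) * (1 - sigJ m₁ m₂)) * (W k Complex.I)ᴴ) := by
      simp only [Matrix.mul_assoc]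
    rw [e2, hpm, Matrix.zero_mul, Matrix.mul_zero, smul_zero]
  · -- Hm (k+1) * (1 + C k) = 0
    have hCp : 1 + C k = W (k+1) (-Complex.I) * ((1 + sigJ m₁ m₂) * (W k Complex.I)ᴴ) := by
      have h := congrArg (fun X => X * (W k Complex.I)ᴴ) (hstarM k)
      simp only [Matrix.mul_assoc] at h
      rw [show (1 + C k) * (W k (-Complex.I) * (W k Complex.I)ᴴ) = 1 + C k from by
        rw [hWmWi, Matrix.mul_one]] at h
      exact h
    rw [hHm (k+1), hP₂, hCp]
    have e : ((2:ℂ) • (W (k+1) (-Complex.I) * ((2:ℂ)⁻¹ • (1 - sigJ m₁ m₂))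
            * (W (k+1) Complex.I)ᴴ))
          * (W (k+1) (-Complex.I) * ((1 + sigJ m₁ m₂) * (W k Complex.I)ᴴ))
        = ((2:ℂ) * (2:ℂ)⁻¹) • (W (k+1) (-Complex.I) * ((1 - sigJ m₁ m₂) *
            (((W (k+1) Complex.I)ᴴ * W (k+1) (-Complex.I)) * ((1 + sigJ m₁ m₂) *
              (W k Complex.I)ᴴ)))) := by
      simp only [Matrix.mul_smul, Matrix.smul_mul, smul_smul, Matrix.mul_assoc]
    rw [e, hU2', Matrix.one_mul]
    have e2 : (1 - sigJ m₁ m₂) * ((1 + sigJ m₁ m₂) * (W k Complex.I)ᴴ)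
        = ((1 - sigJ m₁ m₂) * (1 + sigJ m₁ m₂)) * (W k Complex.I)ᴴ := by
      simp only [Matrix.mul_assoc]
    rw [e2, hmp, Matrix.zero_mul, Matrix.mul_zero, smul_zero]
  · -- (1 - C k) * Hp k = 0
    rw [hHp k, hP₁]
    have e : (1 - C k) * ((2:ℂ) • (W k Complex.I * ((2:ℂ)⁻¹ • (1 + sigJ m₁ m₂))
          * (W k (-Complex.I))ᴴ))
        = ((2:ℂ) * (2:ℂ)⁻¹) • (((1 - C k) * W k Complex.I)
          * ((1 + sigJ m₁ m₂) * (W k (-Complex.I))ᴴ)) := by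
      simp only [Matrix.mul_smul, Matrix.smul_mul, smul_smul, Matrix.mul_assoc]
    rw [e, hstarP k]
    have e2 : (W (k+1) Complex.I * (1 - sigJ m₁ m₂)) * ((1 + sigJ m₁ m₂) * (W k (-Complex.I))ᴴ)
        = W (k+1) Complex.I * (((1 - sigJ m₁ m₂) * (1 + sigJ m₁ m₂)) * (W k (-Complex.I))ᴴ) := by
      simp only [Matrix.mul_assoc]
    rw [e2, hmp, Matrix.zero_mul, Matrix.mul_zero, smul_zero]
  · -- Hp (k+1) * (1 - C k) = 0
    have hCm : 1 - C k = W (k+1) Complex.I * ((1 - sigJ m₁ m₂) * (W k (-Complex.I))ᴴ) := by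
      have h := congrArg (fun X => X * (W k (-Complex.I))ᴴ) (hstarP k)
      simp only [Matrix.mul_assoc] at h
      rw [show (1 - C k) * (W k Complex.I * (W k (-Complex.I))ᴴ) = 1 - C k from by
        rw [hWiWm, Matrix.mul_one]] at h
      exact h
    rw [hHp (k+1), hP₁, hCm]
    have e : ((2:ℂ) • (W (k+1) Complex.I * ((2:ℂ)⁻¹ • (1 + sigJ m₁ m₂))
            * (W (k+1) (-Complex.I))ᴴ))
          * (W (k+1) Complex.I * ((1 - sigJ m₁ m₂) * (W k (-Complex.I))ᴴ))
        = ((2:ℂ) * (2:ℂ)⁻¹) • (W (k+1) Complex.I * ((1 + sigJ m₁ m₂) *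
            (((W (k+1) (-Complex.I))ᴴ * W (k+1) Complex.I) * ((1 - sigJ m₁ m₂) *
              (W k (-Complex.I))ᴴ)))) := by
      simp only [Matrix.mul_smul, Matrix.smul_mul, smul_smul, Matrix.mul_assoc]
    rw [e, hU1', Matrix.one_mul]
    have e2 : (1 + sigJ m₁ m₂) * ((1 - sigJ m₁ m₂) * (W k (-Complex.I))ᴴ)
        = ((1 + sigJ m₁ m₂) * (1 - sigJ m₁ m₂)) * (W k (-Complex.I))ᴴ := by
      simp only [Matrix.mul_assoc]
    rw [e2, hpm, Matrix.zero_mul, Matrix.mul_zero, smul_zero]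
end

section
/- For k ∈ ℕ₀ let C_k(t), H_k⁺(t), H_k⁻(t) be m×m-matrix-valued differentiable functions of t ∈ ℝ satisfying, for all t and all k ∈ ℕ₀: (I_m + C_k(t))H_k⁻(t) = H_{k+1}⁻(t)(I_m + C_k(t)) = 0 and (I_m − C_k(t))H_k⁺(t) = H_{k+1}⁺(t)(I_m − C_k(t)) = 0. Define G_k(t, z) = I_m + (i/z)C_k(t) and F_k(t, z) = −H_k⁺(t)/(z + i) − H_k⁻(t)/(z − i). Then for each fixed k and t, the generalized discrete Heisenberg magnet equation i·(d/dt)C_k(t) = (H_{k+1}⁻(t) − H_{k+1}⁺(t))C_k(t) − C_k(t)(H_k⁻(t) − H_k⁺(t)) holds if and only if the compatibility condition (d/dt)G_k(t, z) = F_{k+1}(t, z)G_k(t, z) − G_k(t, z)F_k(t, z) holds for all z ∈ ℂ \ {0, i, −i}. -/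
open Matrix

/-- for matrix functions satisfying the annihilation conditions, the
generalized discrete Heisenberg magnet equation
`i C_k' = (H_{k+1}⁻ − H_{k+1}⁺)C_k − C_k(H_k⁻ − H_k⁺)` is equivalent to the compatibility
condition `G_k' = F_{k+1}G_k − G_kF_k` for all `z ∈ ℂ \ {0, i, −i}`,
where `G_k(t,z) = I + (i/z)C_k(t)` and `F_k(t,z) = −H_k⁺(t)/(z+i) − H_k⁻(t)/(z−i)`. -/
theorem dghm_iff_compatibility
    {m : ℕ}
    (C Hp Hm : ℕ → ℝ → Matrix (Fin m) (Fin m) ℂ)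
    (hCdiff : ∀ (k : ℕ) (p q : Fin m), Differentiable ℝ (fun t : ℝ => C k t p q))
    (hHpdiff : ∀ (k : ℕ) (p q : Fin m), Differentiable ℝ (fun t : ℝ => Hp k t p q))
    (hHmdiff : ∀ (k : ℕ) (p q : Fin m), Differentiable ℝ (fun t : ℝ => Hm k t p q))
    (hm1 : ∀ (k : ℕ) (t : ℝ), (1 + C k t) * Hm k t = 0)
    (hm2 : ∀ (k : ℕ) (t : ℝ), Hm (k + 1) t * (1 + C k t) = 0)
    (hp1 : ∀ (k : ℕ) (t : ℝ), (1 - C k t) * Hp k t = 0)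
    (hp2 : ∀ (k : ℕ) (t : ℝ), Hp (k + 1) t * (1 - C k t) = 0)
    (G : ℕ → ℝ → ℂ → Matrix (Fin m) (Fin m) ℂ)
    (hG : ∀ (k : ℕ) (t : ℝ) (z : ℂ), G k t z = 1 + (Complex.I / z) • C k t)
    (F : ℕ → ℝ → ℂ → Matrix (Fin m) (Fin m) ℂ)
    (hF : ∀ (k : ℕ) (t : ℝ) (z : ℂ),
      F k t z = -((z + Complex.I)⁻¹ • Hp k t) - (z - Complex.I)⁻¹ • Hm k t)
    (k : ℕ) (t : ℝ) :
    (∀ p q : Fin m,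
      Complex.I * deriv (fun s : ℝ => C k s p q) t =
        ((Hm (k + 1) t - Hp (k + 1) t) * C k t - C k t * (Hm k t - Hp k t)) p q) ↔
    (∀ z : ℂ, z ≠ 0 → z ≠ Complex.I → z ≠ -Complex.I →
      ∀ p q : Fin m,
        deriv (fun s : ℝ => G k s z p q) t =
          (F (k + 1) t z * G k t z - G k t z * F k t z) p q) := by

  have hA : Hp (k+1) t * C k t = Hp (k+1) t := by
    have h := hp2 k t
    rw [mul_sub, mul_one, sub_eq_zero] at h
    exact h.symm
  have hB : C k t * Hp k t = Hp k t := by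
    have h := hp1 k t
    rw [sub_mul, one_mul, sub_eq_zero] at h
    exact h.symm
  have hD : Hm (k+1) t * C k t = -(Hm (k+1) t) := by
    have h := hm2 k t
    rw [mul_add, mul_one] at h
    exact eq_neg_of_add_eq_zero_right h
  have hE : C k t * Hm k t = -(Hm k t) := by
    have h := hm1 k t
    rw [add_mul, one_mul] at h
    exact eq_neg_of_add_eq_zero_right h
  have key : ∀ z : ℂ, z ≠ 0 → z + Complex.I ≠ 0 → z - Complex.I ≠ 0 →
      F (k+1) t z * G k t z - G k t z * F k t z
        = z⁻¹ • ((Hm (k + 1) t - Hp (k + 1) t) * C k t - C k t * (Hm k t - Hp k t)) := by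
    intro z hz hzp hzm
    rw [hF, hF, hG]
    simp only [sub_mul, mul_sub, add_mul, mul_add, neg_mul, mul_neg,
      Matrix.smul_mul, Matrix.mul_smul, mul_one, one_mul, smul_smul,
      hA, hB, hD, hE, smul_neg, neg_smul]
    match_scalars <;> field_simp <;> first | tauto | ring
  have hGderiv : ∀ z : ℂ, z ≠ 0 → ∀ p q : Fin m,
      deriv (fun s : ℝ => G k s z p q) t
        = z⁻¹ * (Complex.I * deriv (fun s : ℝ => C k s p q) t) := by
    intro z hz p q
    have heq : (fun s : ℝ => G k s z p q)
        = fun s : ℝ => (1 : Matrix (Fin m) (Fin m) ℂ) p q + (Complex.I / z) * C k s p q := by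
      funext s
      rw [hG]
      simp [Matrix.add_apply, Matrix.smul_apply, smul_eq_mul]
    rw [heq, deriv_const_add, deriv_const_mul _ (hCdiff k p q).differentiableAt,
      div_eq_mul_inv]
    ring
  constructor
  · intro h z hz hzi hzni p q
    have hzp : z + Complex.I ≠ 0 := by
      intro hc
      exact hzni (by linear_combination hc)
    have hzm : z - Complex.I ≠ 0 := sub_ne_zero.mpr hzi
    rw [hGderiv z hz p q, key z hz hzp hzm, Matrix.smul_apply, smul_eq_mul, h p q]
  · intro h p q
    have h1 : (1:ℂ) ≠ 0 := one_ne_zero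
    have h2 : (1:ℂ) ≠ Complex.I := by
      intro hc
      have := congrArg Complex.im hc
      simp at this
    have h3 : (1:ℂ) ≠ -Complex.I := by
      intro hc
      have := congrArg Complex.im hc
      simp at this
    have hp0 : (1:ℂ) + Complex.I ≠ 0 := by
      intro hc
      have := congrArg Complex.im hc
      simp at this
    have hm0 : (1:ℂ) - Complex.I ≠ 0 := by
      intro hc
      have := congrArg Complex.im hc
      simp at this
    have hh := h 1 h1 h2 h3 p q
    rw [hGderiv 1 h1 p q, key 1 h1 hp0 hm0, Matrix.smul_apply, smul_eq_mul] at hh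
    simpa using hh
end

section
/- Let Σ = {α, S₀, ϑ₁, ϑ₂} be a strongly admissible quadruple and let k be a positive integer. Define ϑ₁(t) = e^{−itα^k}ϑ₁, ϑ₂(t) = e^{itα^k}ϑ₂, Λ(t) = [ϑ₁(t), ϑ₂(t)], and S(t) = S₀ + ∫₀ᵗ Σ_{ν=1}^{k} α^{ν−1}Λ(s) j Λ(s)* (α*)^{k−ν} ds for t ∈ ℝ. Then for every t ∈ ℝ the quadruple Σ(t) = {α, S(t), ϑ₁(t), ϑ₂(t)} is strongly admissible: S(t) is Hermitian positive definite, αS(t) − S(t)α* = iΛ(t)Λ(t)*, and the pair (α, ϑ₁(t)) is controllable. -/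
open Matrix
open scoped ComplexOrder
open NormedSpace

namespace SAF

attribute [local instance] Matrix.linftyOpNormedAddCommGroup Matrix.linftyOpNormedRing
  Matrix.linftyOpNormedAlgebra

variable {n m₁ m₂ : ℕ}

lemma telescope (B C : Matrix (Fin n) (Fin n) ℂ) :
    ∀ k : ℕ, 0 < k → ∀ X : Matrix (Fin n) (Fin n) ℂ,
    B * (∑ ν ∈ Finset.range k, B ^ ν * X * C ^ (k - 1 - ν))
      - (∑ ν ∈ Finset.range k, B ^ ν * X * C ^ (k - 1 - ν)) * C
      = B ^ k * X - X * C ^ k := by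
  intro k
  induction k with
  | zero => omega
  | succ k ih =>
    intro _ X
    rcases Nat.eq_zero_or_pos k with rfl | hk'
    · simp
    · have h1 : ∑ ν ∈ Finset.range (k+1), B ^ ν * X * C ^ (k + 1 - 1 - ν)
          = (∑ ν ∈ Finset.range k, B ^ ν * X * C ^ (k - 1 - ν)) * C + B ^ k * X := by
        rw [Finset.sum_range_succ, Finset.sum_mul]
        congr 1
        · apply Finset.sum_congr rfl
          intro ν hν
          have hν' : ν < k := Finset.mem_range.mp hν
          have : k + 1 - 1 - ν = (k - 1 - ν) + 1 := by omega
          rw [this, pow_succ, ← mul_assoc]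
        · simp
      have hBT : B * (∑ ν ∈ Finset.range k, B ^ ν * X * C ^ (k - 1 - ν))
          = (∑ ν ∈ Finset.range k, B ^ ν * X * C ^ (k - 1 - ν)) * C + (B ^ k * X - X * C ^ k) := by
        rw [← ih hk' X]; abel
      rw [h1, mul_add, add_mul, ← mul_assoc B, hBT]
      rw [pow_succ' B, pow_succ C]
      noncomm_ring

lemma reflect (α M : Matrix (Fin n) (Fin n) ℂ) (k : ℕ) :
    (∑ ν ∈ Finset.range k, α ^ ν * M * (αᴴ) ^ (k - 1 - ν))ᴴ
      = ∑ ν ∈ Finset.range k, α ^ ν * Mᴴ * (αᴴ) ^ (k - 1 - ν) := by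
  rw [conjTranspose_sum]
  rw [← Finset.sum_range_reflect (fun ν => α ^ ν * Mᴴ * (αᴴ) ^ (k - 1 - ν)) k]
  apply Finset.sum_congr rfl
  intro ν hν
  have hν' : ν < k := Finset.mem_range.mp hν
  have h2 : k - 1 - (k - 1 - ν) = ν := by omega
  simp only [conjTranspose_mul, conjTranspose_pow, conjTranspose_conjTranspose, h2]
  rw [mul_assoc]

/-- extraction of a matrix entry as a continuous linear map -/
noncomputable def entryCLM (p q : Fin n) : Matrix (Fin n) (Fin n) ℂ →L[ℝ] ℂ :=
  LinearMap.toContinuousLinearMap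
    { toFun := fun X => X p q, map_add' := fun _ _ => rfl, map_smul' := fun _ _ => rfl }

lemma hasDerivAt_entry {F : ℝ → Matrix (Fin n) (Fin n) ℂ} {F' : Matrix (Fin n) (Fin n) ℂ} {t : ℝ}
    (h : HasDerivAt F F' t) (p q : Fin n) :
    HasDerivAt (fun u => F u p q) (F' p q) t := by
  have h2 := (entryCLM p q).hasFDerivAt.comp_hasDerivAt t h
  exact h2

lemma continuous_entry {F : ℝ → Matrix (Fin n) (Fin n) ℂ} (h : Continuous F) (p q : Fin n) :
    Continuous fun u => F u p q :=
  (entryCLM p q).continuous.comp h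

lemma lambda_j (B : Matrix (Fin n) (Fin m₁) ℂ) (C : Matrix (Fin n) (Fin m₂) ℂ) :
    fromCols B C * sigJ m₁ m₂ * (fromCols B C)ᴴ = B * Bᴴ - C * Cᴴ := by
  rw [sigJ, fromCols_mul_fromBlocks, conjTranspose_fromCols_eq_fromRows_conjTranspose,
    fromCols_mul_fromRows]
  simp [Matrix.mul_neg, sub_eq_add_neg]

lemma lambda_lambda (B : Matrix (Fin n) (Fin m₁) ℂ) (C : Matrix (Fin n) (Fin m₂) ℂ) :
    fromCols B C * (fromCols B C)ᴴ = B * Bᴴ + C * Cᴴ := by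
  rw [conjTranspose_fromCols_eq_fromRows_conjTranspose, fromCols_mul_fromRows]

/-- The four exponential flows -/
noncomputable def e1 (α : Matrix (Fin n) (Fin n) ℂ) (k : ℕ) (t : ℝ) : Matrix (Fin n) (Fin n) ℂ :=
  exp ((-(Complex.I * (t : ℂ))) • α ^ k)

noncomputable def e2 (α : Matrix (Fin n) (Fin n) ℂ) (k : ℕ) (t : ℝ) : Matrix (Fin n) (Fin n) ℂ :=
  exp ((Complex.I * (t : ℂ)) • α ^ k)

noncomputable def f1 (α : Matrix (Fin n) (Fin n) ℂ) (k : ℕ) (t : ℝ) : Matrix (Fin n) (Fin n) ℂ :=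
  exp ((Complex.I * (t : ℂ)) • (αᴴ) ^ k)

noncomputable def f2 (α : Matrix (Fin n) (Fin n) ℂ) (k : ℕ) (t : ℝ) : Matrix (Fin n) (Fin n) ℂ :=
  exp ((-(Complex.I * (t : ℂ))) • (αᴴ) ^ k)

variable (α : Matrix (Fin n) (Fin n) ℂ) (k : ℕ)

lemma hasDerivAt_expc (c : ℂ) (B : Matrix (Fin n) (Fin n) ℂ) (t : ℝ) :
    HasDerivAt (fun u : ℝ => exp ((c * (u : ℂ)) • B)) (c • (exp ((c * (t : ℂ)) • B) * B)) t := by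
  have h1 : HasDerivAt (fun z : ℂ => exp (z • B)) (exp (((c*t : ℂ)) • B) * B) ((c*t : ℂ)) :=
    hasDerivAt_exp_smul_const B ((c*t : ℂ))
  have h2 : HasDerivAt (fun u : ℝ => (c * (u:ℂ))) c t := by
    simpa using (Complex.ofRealCLM.hasDerivAt (x := t)).const_mul c
  exact h1.scomp t h2

lemma hasDerivAt_e1 (t : ℝ) :
    HasDerivAt (e1 α k) ((-Complex.I) • (e1 α k t * α ^ k)) t := by
  have h := hasDerivAt_expc (-Complex.I) (α ^ k) t
  simp only [neg_mul] at h
  exact h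

lemma hasDerivAt_e2 (t : ℝ) :
    HasDerivAt (e2 α k) (Complex.I • (e2 α k t * α ^ k)) t :=
  hasDerivAt_expc Complex.I (α ^ k) t

lemma hasDerivAt_f1 (t : ℝ) :
    HasDerivAt (f1 α k) (Complex.I • (f1 α k t * (αᴴ) ^ k)) t :=
  hasDerivAt_expc Complex.I ((αᴴ) ^ k) t

lemma hasDerivAt_f2 (t : ℝ) :
    HasDerivAt (f2 α k) ((-Complex.I) • (f2 α k t * (αᴴ) ^ k)) t := by
  have h := hasDerivAt_expc (-Complex.I) ((αᴴ) ^ k) t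
  simp only [neg_mul] at h
  exact h

lemma continuous_e1 : Continuous (e1 α k) :=
  continuous_iff_continuousAt.mpr fun t => (hasDerivAt_e1 α k t).continuousAt

lemma continuous_e2 : Continuous (e2 α k) :=
  continuous_iff_continuousAt.mpr fun t => (hasDerivAt_e2 α k t).continuousAt

lemma continuous_f1 : Continuous (f1 α k) :=
  continuous_iff_continuousAt.mpr fun t => (hasDerivAt_f1 α k t).continuousAt

lemma continuous_f2 : Continuous (f2 α k) :=
  continuous_iff_continuousAt.mpr fun t => (hasDerivAt_f2 α k t).continuousAt

lemma commute_pow_e1 (r : ℕ) (t : ℝ) : Commute (α ^ r) (e1 α k t) := by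
  have h : Commute α (e1 α k t) := by
    unfold e1
    exact Commute.exp_right (((Commute.refl α).pow_right k).smul_right (-(Complex.I * (t:ℂ))))
  exact h.pow_left r

lemma commute_pow_e2 (r : ℕ) (t : ℝ) : Commute (α ^ r) (e2 α k t) := by
  have h : Commute α (e2 α k t) := by
    unfold e2
    exact Commute.exp_right (((Commute.refl α).pow_right k).smul_right (Complex.I * (t:ℂ)))
  exact h.pow_left r

lemma commute_pow_f1 (r : ℕ) (t : ℝ) : Commute (αᴴ ^ r) (f1 α k t) := by
  have h : Commute αᴴ (f1 α k t) := by
    unfold f1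
    exact Commute.exp_right (((Commute.refl αᴴ).pow_right k).smul_right (Complex.I * (t:ℂ)))
  exact h.pow_left r

lemma commute_pow_f2 (r : ℕ) (t : ℝ) : Commute (αᴴ ^ r) (f2 α k t) := by
  have h : Commute αᴴ (f2 α k t) := by
    unfold f2
    exact Commute.exp_right (((Commute.refl αᴴ).pow_right k).smul_right (-(Complex.I * (t:ℂ))))
  exact h.pow_left r

lemma e1_conjTranspose (t : ℝ) : (e1 α k t)ᴴ = f1 α k t := by
  rw [e1, f1, ← Matrix.exp_conjTranspose]
  congr 1
  rw [Matrix.conjTranspose_smul, conjTranspose_pow]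
  congr 1
  simp [Complex.ext_iff]

lemma e2_conjTranspose (t : ℝ) : (e2 α k t)ᴴ = f2 α k t := by
  rw [e2, f2, ← Matrix.exp_conjTranspose]
  congr 1
  rw [Matrix.conjTranspose_smul, conjTranspose_pow]
  congr 1
  simp [Complex.ext_iff]

lemma f1_conjTranspose (t : ℝ) : (f1 α k t)ᴴ = e1 α k t := by
  rw [← e1_conjTranspose, conjTranspose_conjTranspose]

lemma f2_conjTranspose (t : ℝ) : (f2 α k t)ᴴ = e2 α k t := by
  rw [← e2_conjTranspose, conjTranspose_conjTranspose]

lemma e1_mul_e2 (t : ℝ) : e1 α k t * e2 α k t = 1 := by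
  rw [e1, e2, ← Matrix.exp_add_of_commute _ _ (((Commute.refl (α ^ k)).smul_left _).smul_right _)]
  rw [show (-(Complex.I * (t:ℂ))) • α ^ k + (Complex.I * (t:ℂ)) • α ^ k = 0 by
    rw [neg_smul]; exact neg_add_cancel _]
  exact exp_zero

lemma e2_mul_e1 (t : ℝ) : e2 α k t * e1 α k t = 1 := by
  rw [e2, e1, ← Matrix.exp_add_of_commute _ _ (((Commute.refl (α ^ k)).smul_left _).smul_right _)]
  rw [show (Complex.I * (t:ℂ)) • α ^ k + (-(Complex.I * (t:ℂ))) • α ^ k = 0 by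
    rw [neg_smul]; exact add_neg_cancel _]
  exact exp_zero

lemma e1_zero : e1 α k 0 = 1 := by
  rw [e1]
  norm_num

lemma e2_zero : e2 α k 0 = 1 := by
  rw [e2]
  norm_num

lemma f1_zero : f1 α k 0 = 1 := by
  rw [f1]
  norm_num

lemma f2_zero : f2 α k 0 = 1 := by
  rw [f2]
  norm_num

noncomputable def PP1 (α : Matrix (Fin n) (Fin n) ℂ) (θ₁ : Matrix (Fin n) (Fin m₁) ℂ) (k : ℕ)
    (t : ℝ) : Matrix (Fin n) (Fin n) ℂ :=
  e1 α k t * (θ₁ * θ₁ᴴ) * f1 α k t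

noncomputable def PP2 (α : Matrix (Fin n) (Fin n) ℂ) (θ₂ : Matrix (Fin n) (Fin m₂) ℂ) (k : ℕ)
    (t : ℝ) : Matrix (Fin n) (Fin n) ℂ :=
  e2 α k t * (θ₂ * θ₂ᴴ) * f2 α k t

noncomputable def MM (α : Matrix (Fin n) (Fin n) ℂ) (θ₁ : Matrix (Fin n) (Fin m₁) ℂ)
    (θ₂ : Matrix (Fin n) (Fin m₂) ℂ) (k : ℕ) (t : ℝ) : Matrix (Fin n) (Fin n) ℂ :=
  PP1 α θ₁ k t - PP2 α θ₂ k t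

noncomputable def NN (α : Matrix (Fin n) (Fin n) ℂ) (θ₁ : Matrix (Fin n) (Fin m₁) ℂ)
    (θ₂ : Matrix (Fin n) (Fin m₂) ℂ) (k : ℕ) (t : ℝ) : Matrix (Fin n) (Fin n) ℂ :=
  PP1 α θ₁ k t + PP2 α θ₂ k t

noncomputable def GG (α : Matrix (Fin n) (Fin n) ℂ) (θ₁ : Matrix (Fin n) (Fin m₁) ℂ)
    (θ₂ : Matrix (Fin n) (Fin m₂) ℂ) (k : ℕ) (t : ℝ) : Matrix (Fin n) (Fin n) ℂ :=
  ∑ ν ∈ Finset.range k, α ^ ν * MM α θ₁ θ₂ k t * (αᴴ) ^ (k - 1 - ν)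

variable (θ₁ : Matrix (Fin n) (Fin m₁) ℂ) (θ₂ : Matrix (Fin n) (Fin m₂) ℂ)

lemma hasDerivAt_PP1 (t : ℝ) :
    HasDerivAt (PP1 α θ₁ k)
      ((-Complex.I) • (α ^ k * PP1 α θ₁ k t) + Complex.I • (PP1 α θ₁ k t * (αᴴ) ^ k)) t := by
  have h := ((hasDerivAt_e1 α k t).mul_const (θ₁ * θ₁ᴴ)).mul (hasDerivAt_f1 α k t)
  have hc := (commute_pow_e1 α k k t).eq
  refine h.congr_deriv ?_
  symm
  rw [smul_mul_assoc, smul_mul_assoc, mul_smul_comm]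
  unfold PP1
  congr 2
  · rw [← mul_assoc, ← hc]
    simp only [mul_assoc]
  · simp only [mul_assoc]

lemma hasDerivAt_PP2 (t : ℝ) :
    HasDerivAt (PP2 α θ₂ k)
      (Complex.I • (α ^ k * PP2 α θ₂ k t) + (-Complex.I) • (PP2 α θ₂ k t * (αᴴ) ^ k)) t := by
  have h := ((hasDerivAt_e2 α k t).mul_const (θ₂ * θ₂ᴴ)).mul (hasDerivAt_f2 α k t)
  have hc := (commute_pow_e2 α k k t).eq
  refine h.congr_deriv ?_
  symm
  rw [smul_mul_assoc, smul_mul_assoc, mul_smul_comm]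
  unfold PP2
  congr 2
  · rw [← mul_assoc, ← hc]
    simp only [mul_assoc]
  · simp only [mul_assoc]

lemma hasDerivAt_NN (t : ℝ) :
    HasDerivAt (NN α θ₁ θ₂ k)
      ((-Complex.I) • (α ^ k * MM α θ₁ θ₂ k t) + Complex.I • (MM α θ₁ θ₂ k t * (αᴴ) ^ k)) t := by
  have h := (hasDerivAt_PP1 α k θ₁ t).add (hasDerivAt_PP2 α k θ₂ t)
  have hfun : NN α θ₁ θ₂ k = fun u => PP1 α θ₁ k u + PP2 α θ₂ k u := rfl
  rw [hfun]
  refine h.congr_deriv ?_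
  symm
  unfold MM
  rw [mul_sub, sub_mul, smul_sub, smul_sub]
  module

lemma continuous_PP1 : Continuous (PP1 α θ₁ k) :=
  ((continuous_e1 α k).mul continuous_const).mul (continuous_f1 α k)

lemma continuous_PP2 : Continuous (PP2 α θ₂ k) :=
  ((continuous_e2 α k).mul continuous_const).mul (continuous_f2 α k)

lemma continuous_MM : Continuous (MM α θ₁ θ₂ k) :=
  (continuous_PP1 α k θ₁).sub (continuous_PP2 α k θ₂)

lemma continuous_GG : Continuous (GG α θ₁ θ₂ k) := by
  unfold GG
  exact continuous_finset_sum _ fun ν _ => (continuous_const.mul (continuous_MM α k θ₁ θ₂)).mul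
    continuous_const

lemma PP1_herm (t : ℝ) : (PP1 α θ₁ k t)ᴴ = PP1 α θ₁ k t := by
  unfold PP1
  rw [conjTranspose_mul, conjTranspose_mul, f1_conjTranspose, conjTranspose_mul,
    conjTranspose_conjTranspose, e1_conjTranspose, mul_assoc]

lemma PP2_herm (t : ℝ) : (PP2 α θ₂ k t)ᴴ = PP2 α θ₂ k t := by
  unfold PP2
  rw [conjTranspose_mul, conjTranspose_mul, f2_conjTranspose, conjTranspose_mul,
    conjTranspose_conjTranspose, e2_conjTranspose, mul_assoc]

lemma MM_herm (t : ℝ) : (MM α θ₁ θ₂ k t)ᴴ = MM α θ₁ θ₂ k t := by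
  unfold MM
  rw [conjTranspose_sub, PP1_herm, PP2_herm]

lemma GG_herm (t : ℝ) : (GG α θ₁ θ₂ k t)ᴴ = GG α θ₁ θ₂ k t := by
  unfold GG
  rw [reflect, MM_herm]

lemma GG_telescope (hk : 0 < k) (t : ℝ) :
    α * GG α θ₁ θ₂ k t - GG α θ₁ θ₂ k t * αᴴ
      = α ^ k * MM α θ₁ θ₂ k t - MM α θ₁ θ₂ k t * (αᴴ) ^ k := by
  unfold GG
  exact telescope α (αᴴ) k hk (MM α θ₁ θ₂ k t)

lemma smul_I_IXY (X Y : Matrix (Fin n) (Fin n) ℂ) :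
    Complex.I • ((-Complex.I) • X + Complex.I • Y) = X - Y := by
  rw [smul_add, smul_smul, smul_smul, mul_neg, Complex.I_mul_I, neg_neg, one_smul, neg_one_smul]
  exact (sub_eq_add_neg X Y).symm

set_option maxHeartbeats 2000000 in
theorem main {n m₁ m₂ : ℕ} (α S₀ : Matrix (Fin n) (Fin n) ℂ)
    (θ₁ : Matrix (Fin n) (Fin m₁) ℂ) (θ₂ : Matrix (Fin n) (Fin m₂) ℂ)
    (hadm : S₀.PosDef ∧ α * S₀ - S₀ * αᴴ = Complex.I • (θ₁ * θ₁ᴴ + θ₂ * θ₂ᴴ))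
    (hctrl : Submodule.span ℂ
      {v : Fin n → ℂ | ∃ r : ℕ, r < n ∧ ∃ j : Fin m₁, v = fun i => (α ^ r * θ₁) i j} = ⊤)
    (k : ℕ) (hk : 0 < k)
    (ϑ₁ : ℝ → Matrix (Fin n) (Fin m₁) ℂ)
    (hϑ₁ : ∀ t : ℝ, ϑ₁ t = exp ((-(Complex.I * (t : ℂ))) • α ^ k) * θ₁)
    (ϑ₂ : ℝ → Matrix (Fin n) (Fin m₂) ℂ)
    (hϑ₂ : ∀ t : ℝ, ϑ₂ t = exp ((Complex.I * (t : ℂ)) • α ^ k) * θ₂)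
    (Λ : ℝ → Matrix (Fin n) (Fin m₁ ⊕ Fin m₂) ℂ)
    (hΛ : ∀ t : ℝ, Λ t = Matrix.fromCols (ϑ₁ t) (ϑ₂ t))
    (S : ℝ → Matrix (Fin n) (Fin n) ℂ)
    (hS : ∀ (t : ℝ) (p q : Fin n),
      S t p q = S₀ p q + ∫ s in (0:ℝ)..t,
        ((∑ ν ∈ Finset.range k,
          α ^ ν * (Λ s * sigJ m₁ m₂ * (Λ s)ᴴ) * (αᴴ) ^ (k - 1 - ν) :
          Matrix (Fin n) (Fin n) ℂ) p q)) :
    ∀ t : ℝ, (S t).PosDef ∧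
      (α * S t - S t * αᴴ = Complex.I • (Λ t * (Λ t)ᴴ)) ∧
      (Submodule.span ℂ
        {v : Fin n → ℂ | ∃ r : ℕ, r < n ∧ ∃ j : Fin m₁, v = fun i => (α ^ r * ϑ₁ t) i j} = ⊤) ∧
      ((S t).PosDef ∧
        α * S t - S t * αᴴ = Complex.I • (ϑ₁ t * (ϑ₁ t)ᴴ + ϑ₂ t * (ϑ₂ t)ᴴ)) := by
  classical
  obtain ⟨hS₀pd, hadm2⟩ := hadm
  have hϑ₁e : ∀ t, ϑ₁ t = e1 α k t * θ₁ := fun t => hϑ₁ t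
  have hϑ₂e : ∀ t, ϑ₂ t = e2 α k t * θ₂ := fun t => hϑ₂ t
  have hP1 : ∀ t, ϑ₁ t * (ϑ₁ t)ᴴ = PP1 α θ₁ k t := by
    intro t
    rw [hϑ₁e t, conjTranspose_mul, e1_conjTranspose]
    unfold PP1
    simp only [Matrix.mul_assoc]
  have hP2 : ∀ t, ϑ₂ t * (ϑ₂ t)ᴴ = PP2 α θ₂ k t := by
    intro t
    rw [hϑ₂e t, conjTranspose_mul, e2_conjTranspose]
    unfold PP2
    simp only [Matrix.mul_assoc]
  have hMΛ : ∀ t, Λ t * sigJ m₁ m₂ * (Λ t)ᴴ = MM α θ₁ θ₂ k t := by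
    intro t
    rw [hΛ t, lambda_j, hP1 t, hP2 t]
    rfl
  have hNΛ : ∀ t, Λ t * (Λ t)ᴴ = NN α θ₁ θ₂ k t := by
    intro t
    rw [hΛ t, lambda_lambda, hP1 t, hP2 t]
    rfl
  have hS' : ∀ (t : ℝ) (p q : Fin n),
      S t p q = S₀ p q + ∫ s in (0:ℝ)..t, GG α θ₁ θ₂ k s p q := by
    intro t p q
    rw [hS t p q]
    congr 1
    apply intervalIntegral.integral_congr
    intro s _
    simp only [hMΛ]
    rfl
  have hGc : Continuous (GG α θ₁ θ₂ k) := continuous_GG α k θ₁ θ₂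
  have hSd : ∀ (t : ℝ) (p q : Fin n),
      HasDerivAt (fun u => S u p q) (GG α θ₁ θ₂ k t p q) t := by
    intro t p q
    have hfun : (fun u => S u p q) = fun u => S₀ p q + ∫ s in (0:ℝ)..u, GG α θ₁ θ₂ k s p q :=
      funext fun u => hS' u p q
    rw [hfun]
    exact (((continuous_entry hGc p q).integral_hasStrictDerivAt 0 t).hasDerivAt).const_add _
  have hScont : ∀ p q : Fin n, Continuous fun u => S u p q := fun p q =>
    continuous_iff_continuousAt.mpr fun t => (hSd t p q).continuousAt
  have hS0 : S 0 = S₀ :=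
    Matrix.ext fun p q => by rw [hS' 0 p q, intervalIntegral.integral_same, add_zero]
  have hR0 : α * S 0 - S 0 * αᴴ - Complex.I • NN α θ₁ θ₂ k 0 = 0 := by
    have hN0 : NN α θ₁ θ₂ k 0 = θ₁ * θ₁ᴴ + θ₂ * θ₂ᴴ := by
      unfold NN PP1 PP2
      rw [e1_zero, e2_zero, f1_zero, f2_zero, one_mul, one_mul, mul_one, mul_one]
    rw [hS0, hN0, hadm2, sub_self]
  have hRconst : ∀ (t : ℝ) (p q : Fin n),
      (α * S t - S t * αᴴ - Complex.I • NN α θ₁ θ₂ k t) p q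
        = (α * S 0 - S 0 * αᴴ - Complex.I • NN α θ₁ θ₂ k 0) p q := by
    intro t p q
    have hder : ∀ u : ℝ,
        HasDerivAt (fun w => (α * S w - S w * αᴴ - Complex.I • NN α θ₁ θ₂ k w) p q) 0 u := by
      intro u
      have h1 : HasDerivAt (fun w => (α * S w) p q) ((α * GG α θ₁ θ₂ k u) p q) u := by
        simp only [Matrix.mul_apply]
        exact HasDerivAt.fun_sum fun r _ => (hSd u r q).const_mul (α p r)
      have h2 : HasDerivAt (fun w => (S w * αᴴ) p q) ((GG α θ₁ θ₂ k u * αᴴ) p q) u := by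
        simp only [Matrix.mul_apply]
        exact HasDerivAt.fun_sum fun r _ => (hSd u p r).mul_const (αᴴ r q)
      have h3 : HasDerivAt (fun w => (Complex.I • NN α θ₁ θ₂ k w) p q)
          ((Complex.I • ((-Complex.I) • (α ^ k * MM α θ₁ θ₂ k u)
            + Complex.I • (MM α θ₁ θ₂ k u * (αᴴ) ^ k))) p q) u :=
        hasDerivAt_entry ((hasDerivAt_NN α k θ₁ θ₂ u).const_smul Complex.I) p q
      have h4 := (h1.sub h2).sub h3
      have hzero : α * GG α θ₁ θ₂ k u - GG α θ₁ θ₂ k u * αᴴ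
          - Complex.I • ((-Complex.I) • (α ^ k * MM α θ₁ θ₂ k u)
            + Complex.I • (MM α θ₁ θ₂ k u * (αᴴ) ^ k)) = 0 := by
        rw [smul_I_IXY, GG_telescope α k θ₁ θ₂ hk u, sub_self]
      have hval : (α * GG α θ₁ θ₂ k u) p q - (GG α θ₁ θ₂ k u * αᴴ) p q
          - (Complex.I • ((-Complex.I) • (α ^ k * MM α θ₁ θ₂ k u)
            + Complex.I • (MM α θ₁ θ₂ k u * (αᴴ) ^ k))) p q = 0 := by
        have h5 := Matrix.ext_iff.mpr hzero p q
        simp only [Matrix.sub_apply, Matrix.add_apply, Matrix.smul_apply, smul_eq_mul,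
          Matrix.zero_apply] at h5
        simp only [Matrix.smul_apply, Matrix.add_apply, smul_eq_mul]
        linear_combination h5
      have hfun2 : (fun w => (α * S w - S w * αᴴ - Complex.I • NN α θ₁ θ₂ k w) p q)
          = fun w => (α * S w) p q - (S w * αᴴ) p q - (Complex.I • NN α θ₁ θ₂ k w) p q := by
        funext w; simp [Matrix.sub_apply]
      rw [hfun2]
      have h6 := h4
      rw [hval] at h6
      exact h6
    exact is_const_of_deriv_eq_zero (fun u => (hder u).differentiableAt)
      (fun u => (hder u).deriv) t 0
  have hid : ∀ t : ℝ, α * S t - S t * αᴴ = Complex.I • NN α θ₁ θ₂ k t := by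
    intro t
    have h : α * S t - S t * αᴴ - Complex.I • NN α θ₁ θ₂ k t = 0 :=
      Matrix.ext fun p q => by rw [hRconst t p q, hR0]
    rwa [sub_eq_zero] at h
  have hSH : ∀ t : ℝ, (S t).IsHermitian := by
    intro t
    show (S t)ᴴ = S t
    apply Matrix.ext
    intro p q
    rw [Matrix.conjTranspose_apply, hS' t q p, hS' t p q, star_add]
    congr 1
    · calc star (S₀ q p) = S₀ᴴ p q := (Matrix.conjTranspose_apply _ _ _).symm
      _ = S₀ p q := by rw [hS₀pd.1]
    · have hcongr : ∀ s : ℝ, star (GG α θ₁ θ₂ k s q p) = GG α θ₁ θ₂ k s p q := by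
        intro s
        calc star (GG α θ₁ θ₂ k s q p) = (GG α θ₁ θ₂ k s)ᴴ p q :=
          (Matrix.conjTranspose_apply _ _ _).symm
        _ = GG α θ₁ θ₂ k s p q := by rw [GG_herm α k θ₁ θ₂ s]
      calc star (∫ s in (0:ℝ)..t, GG α θ₁ θ₂ k s q p)
          = ∫ s in (0:ℝ)..t, star (GG α θ₁ θ₂ k s q p) :=
        ((Complex.conjCLE.toContinuousLinearMap).intervalIntegral_comp_comm
          ((continuous_entry hGc q p).intervalIntegrable 0 t)).symm
      _ = ∫ s in (0:ℝ)..t, GG α θ₁ θ₂ k s p q := by simp only [hcongr]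
  have hctrl' : ∀ t : ℝ, Submodule.span ℂ
      {v : Fin n → ℂ | ∃ r : ℕ, r < n ∧ ∃ j : Fin m₁, v = fun i => (α ^ r * ϑ₁ t) i j} = ⊤ := by
    intro t
    have hcol : ∀ (B : Matrix (Fin n) (Fin m₁) ℂ) (j : Fin m₁),
        (e1 α k t) *ᵥ (fun i => B i j) = fun i => (e1 α k t * B) i j := by
      intro B j; funext i; simp [Matrix.mulVec, Matrix.mul_apply, dotProduct]
    have hmat : ∀ r : ℕ, α ^ r * ϑ₁ t = e1 α k t * (α ^ r * θ₁) := by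
      intro r
      rw [hϑ₁e t, ← Matrix.mul_assoc, (commute_pow_e1 α k r t).eq, Matrix.mul_assoc]
    have hset : {v : Fin n → ℂ | ∃ r : ℕ, r < n ∧ ∃ j : Fin m₁, v = fun i => (α ^ r * ϑ₁ t) i j}
        = (Matrix.mulVecLin (e1 α k t)) ''
          {v : Fin n → ℂ | ∃ r : ℕ, r < n ∧ ∃ j : Fin m₁, v = fun i => (α ^ r * θ₁) i j} := by
      ext v
      simp only [Set.mem_image, Set.mem_setOf_eq]
      constructor
      · rintro ⟨r, hr, j, rfl⟩
        refine ⟨fun i => (α ^ r * θ₁) i j, ⟨r, hr, j, rfl⟩, ?_⟩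
        show (e1 α k t) *ᵥ (fun i => (α ^ r * θ₁) i j) = _
        rw [hcol, hmat r]
      · rintro ⟨w, ⟨r, hr, j, rfl⟩, rfl⟩
        refine ⟨r, hr, j, ?_⟩
        show (e1 α k t) *ᵥ (fun i => (α ^ r * θ₁) i j) = _
        rw [hcol, hmat r]
    rw [hset, Submodule.span_image, hctrl, Submodule.map_top, LinearMap.range_eq_top]
    intro w
    refine ⟨(e2 α k t) *ᵥ w, ?_⟩
    show (e1 α k t) *ᵥ ((e2 α k t) *ᵥ w) = w
    rw [Matrix.mulVec_mulVec, e1_mul_e2, Matrix.one_mulVec]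
  have hstep : ∀ (t : ℝ) (w : Fin n → ℂ), S t *ᵥ w = 0 →
      ((Λ t)ᴴ *ᵥ w = 0 ∧ S t *ᵥ (αᴴ *ᵥ w) = 0) := by
    intro t w hw
    have hrel : α * S t - S t * αᴴ = Complex.I • (Λ t * (Λ t)ᴴ) := by
      rw [hNΛ t]; exact hid t
    have h1 : α *ᵥ (S t *ᵥ w) - S t *ᵥ (αᴴ *ᵥ w) = Complex.I • (Λ t *ᵥ ((Λ t)ᴴ *ᵥ w)) := by
      have h := congrArg (fun X : Matrix (Fin n) (Fin n) ℂ => X *ᵥ w) hrel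
      simpa [Matrix.sub_mulVec, ← Matrix.mulVec_mulVec, Matrix.smul_mulVec] using h
    rw [hw, Matrix.mulVec_zero, zero_sub] at h1
    have hwS : star w ᵥ* S t = 0 := by
      have h := congrArg star hw
      rw [Matrix.star_mulVec, (hSH t).eq] at h
      simpa using h
    have h4 : star ((Λ t)ᴴ *ᵥ w) ⬝ᵥ ((Λ t)ᴴ *ᵥ w) = 0 := by
      have h := congrArg (fun u => star w ⬝ᵥ u) h1
      simp only [dotProduct_neg] at h
      rw [Matrix.dotProduct_mulVec, hwS, zero_dotProduct, neg_zero,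
        dotProduct_smul, Matrix.dotProduct_mulVec (star w) (Λ t)] at h
      rw [show star w ᵥ* Λ t = star ((Λ t)ᴴ *ᵥ w) by
        rw [Matrix.star_mulVec, conjTranspose_conjTranspose]] at h
      have h5 := h.symm
      rw [smul_eq_mul, mul_eq_zero] at h5
      rcases h5 with h5 | h5
      · exact absurd h5 Complex.I_ne_zero
      · exact h5
    have hz : (Λ t)ᴴ *ᵥ w = 0 := dotProduct_star_self_eq_zero.mp h4
    refine ⟨hz, ?_⟩
    rw [hz, Matrix.mulVec_zero, smul_zero, neg_eq_zero] at h1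
    exact h1
  have hker : ∀ (t : ℝ) (v : Fin n → ℂ), S t *ᵥ v = 0 → v = 0 := by
    intro t v hv
    have hiter : ∀ r : ℕ, S t *ᵥ ((αᴴ ^ r) *ᵥ v) = 0 := by
      intro r
      induction r with
      | zero => simpa using hv
      | succ r ih =>
        rw [pow_succ', ← Matrix.mulVec_mulVec]
        exact (hstep t _ ih).2
    have hθv : ∀ r : ℕ, ((α ^ r * ϑ₁ t)ᴴ) *ᵥ v = 0 := by
      intro r
      have h := (hstep t _ (hiter r)).1
      rw [hΛ t, conjTranspose_fromCols_eq_fromRows_conjTranspose, Matrix.fromRows_mulVec] at h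
      have h1 : (ϑ₁ t)ᴴ *ᵥ ((αᴴ ^ r) *ᵥ v) = 0 := by
        funext j
        exact congrFun h (Sum.inl j)
      rw [conjTranspose_mul, conjTranspose_pow, ← Matrix.mulVec_mulVec]
      exact h1
    have horth : ∀ w ∈ {v' : Fin n → ℂ | ∃ r : ℕ, r < n ∧ ∃ j : Fin m₁,
        v' = fun i => (α ^ r * ϑ₁ t) i j}, star v ⬝ᵥ w = 0 := by
      rintro w ⟨r, hr, j, rfl⟩
      have h6 := congrArg star (hθv r)
      rw [Matrix.star_mulVec, conjTranspose_conjTranspose] at h6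
      have h7 := congrFun h6 j
      simpa [Matrix.vecMul, dotProduct] using h7
    let φ : (Fin n → ℂ) →ₗ[ℂ] ℂ :=
      { toFun := fun w => star v ⬝ᵥ w
        map_add' := fun a b => dotProduct_add _ a b
        map_smul' := fun c a => by simp [dotProduct_smul, smul_eq_mul] }
    have hsub : {v' : Fin n → ℂ | ∃ r : ℕ, r < n ∧ ∃ j : Fin m₁,
        v' = fun i => (α ^ r * ϑ₁ t) i j} ⊆ (LinearMap.ker φ : Set (Fin n → ℂ)) :=
      fun w hw => LinearMap.mem_ker.mpr (horth w hw)
    have hle := Submodule.span_le.mpr hsub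
    rw [hctrl' t] at hle
    have hv0 : φ v = 0 := LinearMap.mem_ker.mp (hle Submodule.mem_top)
    exact dotProduct_star_self_eq_zero.mp hv0
  -- the quadratic form
  have hqstar : ∀ (t : ℝ) (v : Fin n → ℂ),
      star (star v ⬝ᵥ (S t *ᵥ v)) = star v ⬝ᵥ (S t *ᵥ v) := by
    intro t v
    conv_lhs => rw [Matrix.star_dotProduct, star_star, Matrix.star_mulVec]
    rw [← Matrix.dotProduct_mulVec, (hSH t).eq]
  have hqim : ∀ (t : ℝ) (v : Fin n → ℂ), (star v ⬝ᵥ (S t *ᵥ v)).im = 0 := by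
    intro t v
    have := hqstar t v
    exact Complex.conj_eq_iff_im.mp this
  have hPSDof : ∀ t : ℝ, (∀ v : Fin n → ℂ, 0 ≤ (star v ⬝ᵥ (S t *ᵥ v)).re) →
      (S t).PosSemidef := by
    intro t h
    refine PosSemidef.of_dotProduct_mulVec_nonneg (hSH t) fun v => ?_
    rw [Complex.nonneg_iff]
    exact ⟨h v, (hqim t v).symm⟩
  have hPDof : ∀ t : ℝ, (∀ v : Fin n → ℂ, 0 ≤ (star v ⬝ᵥ (S t *ᵥ v)).re) →
      (S t).PosDef := by
    intro t h
    have hPSD := hPSDof t h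
    refine PosDef.of_dotProduct_mulVec_pos (hSH t) fun v hv => ?_
    have hle := hPSD.dotProduct_mulVec_nonneg v
    have hne : star v ⬝ᵥ (S t *ᵥ v) ≠ 0 := by
      intro h0
      exact hv (hker t v ((hPSD.dotProduct_mulVec_zero_iff v).mp h0))
    exact lt_of_le_of_ne hle (Ne.symm hne)
  have hqc : ∀ v : Fin n → ℂ, Continuous fun t => star v ⬝ᵥ (S t *ᵥ v) := by
    intro v
    simp only [dotProduct, Matrix.mulVec]
    apply continuous_finset_sum
    intro p _
    exact continuous_const.mul (continuous_finset_sum _ fun r _ => (hScont p r).mul continuous_const)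
  have hQc : Continuous fun p : ℝ × (Fin n → ℂ) => (star p.2 ⬝ᵥ (S p.1 *ᵥ p.2)).re := by
    apply Complex.continuous_re.comp
    simp only [dotProduct, Matrix.mulVec, Pi.star_apply]
    apply continuous_finset_sum
    intro p _
    apply Continuous.mul
    · exact ((continuous_apply p).comp continuous_snd).star
    · apply continuous_finset_sum
      intro r _
      exact ((hScont p r).comp continuous_fst).mul ((continuous_apply r).comp continuous_snd)
  set Aset : Set ℝ := {t | ∀ v : Fin n → ℂ, 0 ≤ (star v ⬝ᵥ (S t *ᵥ v)).re} with hAset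
  have hA0 : (0:ℝ) ∈ Aset := by
    intro v
    by_cases hv : v = 0
    · simp [hv]
    · have h := hS₀pd.dotProduct_mulVec_pos hv
      rw [← hS0] at h
      exact le_of_lt (Complex.pos_iff.mp h).1
  have hclosed : IsClosed Aset := by
    have : Aset = ⋂ v : Fin n → ℂ, {t | 0 ≤ (star v ⬝ᵥ (S t *ᵥ v)).re} := by
      ext t
      simp only [hAset, Set.mem_setOf_eq, Set.mem_iInter]
    rw [this]
    exact isClosed_iInter fun v =>
      isClosed_le continuous_const (Complex.continuous_re.comp (hqc v))
  have hopen : IsOpen Aset := by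
    rw [isOpen_iff_mem_nhds]
    intro t₀ ht₀
    have hPD := hPDof t₀ ht₀
    have hU : IsOpen {p : ℝ × (Fin n → ℂ) | 0 < (star p.2 ⬝ᵥ (S p.1 *ᵥ p.2)).re} :=
      isOpen_lt continuous_const hQc
    have hsub : ({t₀} : Set ℝ) ×ˢ Metric.sphere (0 : Fin n → ℂ) 1
        ⊆ {p : ℝ × (Fin n → ℂ) | 0 < (star p.2 ⬝ᵥ (S p.1 *ᵥ p.2)).re} := by
      rintro ⟨t, v⟩ ⟨ht, hvs⟩
      rw [Set.mem_singleton_iff] at ht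
      subst ht
      have hv0 : v ≠ 0 := by
        intro h0
        rw [mem_sphere_zero_iff_norm, h0] at hvs
        simp at hvs
      exact (Complex.pos_iff.mp (hPD.dotProduct_mulVec_pos hv0)).1
    obtain ⟨u, w, hu, hw, htu, hsw, huw⟩ := generalized_tube_lemma isCompact_singleton
      (isCompact_sphere (0 : Fin n → ℂ) 1) hU hsub
    apply Filter.mem_of_superset (hu.mem_nhds (htu rfl))
    intro t ht v
    by_cases hv : v = 0
    · simp [hv]
    · have hw1 : ‖v‖⁻¹ • v ∈ Metric.sphere (0 : Fin n → ℂ) 1 := by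
        rw [mem_sphere_zero_iff_norm]
        exact norm_smul_inv_norm hv
      have hQ : 0 < (star (‖v‖⁻¹ • v) ⬝ᵥ (S t *ᵥ (‖v‖⁻¹ • v))).re :=
        huw (Set.mk_mem_prod ht (hsw hw1))
      have hvr : v = (‖v‖ : ℝ) • (‖v‖⁻¹ • v) := by
        rw [smul_smul, mul_inv_cancel₀ (norm_ne_zero_iff.mpr hv), one_smul]
      have hsc : star v ⬝ᵥ (S t *ᵥ v)
          = (‖v‖ : ℝ) • ((‖v‖ : ℝ) • (star (‖v‖⁻¹ • v) ⬝ᵥ (S t *ᵥ (‖v‖⁻¹ • v)))) := by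
        conv_lhs => rw [hvr]
        rw [star_smul, star_trivial, smul_dotProduct, Matrix.mulVec_smul,
          dotProduct_smul]
      rw [hsc]
      have hre : ((‖v‖ : ℝ) • ((‖v‖ : ℝ) • (star (‖v‖⁻¹ • v) ⬝ᵥ (S t *ᵥ (‖v‖⁻¹ • v))))).re
          = ‖v‖ * (‖v‖ * (star (‖v‖⁻¹ • v) ⬝ᵥ (S t *ᵥ (‖v‖⁻¹ • v))).re) := by
        simp [Complex.smul_re]
      rw [hre]
      positivity
  have hAuniv : Aset = Set.univ :=
    IsClopen.eq_univ ⟨hclosed, hopen⟩ ⟨0, hA0⟩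
  have hAall : ∀ t : ℝ, ∀ v : Fin n → ℂ, 0 ≤ (star v ⬝ᵥ (S t *ᵥ v)).re := by
    intro t
    have : t ∈ Aset := by rw [hAuniv]; trivial
    exact this
  intro t
  have hPD := hPDof t (hAall t)
  refine ⟨hPD, ?_, hctrl' t, hPD, ?_⟩
  · rw [hNΛ t]
    exact hid t
  · rw [hP1 t, hP2 t]
    exact hid t

end SAF

/-- for a strongly admissible quadruple and a positive integer `k`, the flow
`ϑ₁(t) = e^{−itα^k}ϑ₁`, `ϑ₂(t) = e^{itα^k}ϑ₂`,
`S(t) = S₀ + ∫₀ᵗ Σ_{ν=1}^{k} α^{ν−1}Λ(s) j Λ(s)* (α*)^{k−ν} ds` produces strongly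
admissible quadruples `Σ(t)` for every `t ∈ ℝ`. -/
theorem strongly_admissible_nonlinear_flow
    {n m₁ m₂ : ℕ} (α S₀ : Matrix (Fin n) (Fin n) ℂ)
    (θ₁ : Matrix (Fin n) (Fin m₁) ℂ) (θ₂ : Matrix (Fin n) (Fin m₂) ℂ)
    (hadm : Admissible α S₀ θ₁ θ₂) (hctrl : Controllable α θ₁)
    (k : ℕ) (hk : 0 < k)
    (ϑ₁ : ℝ → Matrix (Fin n) (Fin m₁) ℂ)
    (hϑ₁ : ∀ t : ℝ, ϑ₁ t = NormedSpace.exp ((-(Complex.I * (t : ℂ))) • α ^ k) * θ₁)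
    (ϑ₂ : ℝ → Matrix (Fin n) (Fin m₂) ℂ)
    (hϑ₂ : ∀ t : ℝ, ϑ₂ t = NormedSpace.exp ((Complex.I * (t : ℂ)) • α ^ k) * θ₂)
    (Λ : ℝ → Matrix (Fin n) (Fin m₁ ⊕ Fin m₂) ℂ)
    (hΛ : ∀ t : ℝ, Λ t = Matrix.fromCols (ϑ₁ t) (ϑ₂ t))
    (S : ℝ → Matrix (Fin n) (Fin n) ℂ)
    (hS : ∀ (t : ℝ) (p q : Fin n),
      S t p q = S₀ p q + ∫ s in (0:ℝ)..t,
        ((∑ ν ∈ Finset.range k,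
          α ^ ν * (Λ s * sigJ m₁ m₂ * (Λ s)ᴴ) * (αᴴ) ^ (k - 1 - ν) :
          Matrix (Fin n) (Fin n) ℂ) p q)) :
    ∀ t : ℝ, (S t).PosDef ∧
      (α * S t - S t * αᴴ = Complex.I • (Λ t * (Λ t)ᴴ)) ∧
      Controllable α (ϑ₁ t) ∧
      Admissible α (S t) (ϑ₁ t) (ϑ₂ t) := by
  exact SAF.main α S₀ θ₁ θ₂ hadm hctrl k hk ϑ₁ hϑ₁ ϑ₂ hϑ₂ Λ hΛ S hS
end

section
/- Let Σ = {α, S₀, ϑ₁, ϑ₂} be an admissible quadruple with Λ = [ϑ₁, ϑ₂], and let W_Σ(z) = I_m + iΛ*S₀⁻¹(zI_n − α)⁻¹Λ be its transfer function. Then for every z ∈ ℂ such that neither z nor z̄ is an eigenvalue of α, I_m − W_Σ(z)* W_Σ(z) = i(z − z̄) Λ*(z̄I_n − α*)⁻¹ S₀⁻¹ (zI_n − α)⁻¹ Λ. In particular, for every real λ that is not an eigenvalue of α the matrix W_Σ(λ) is unitary, and for z in the open lower half-plane W_Σ(z)*W_Σ(z) ≤ I_m (so W_Σ is contractive there). 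-/
open Matrix
open scoped ComplexOrder

/-- Key algebraic identity behind the transfer-function computation. -/
lemma key_alg {n m : Type*} [Fintype n] [Fintype m] [DecidableEq n] [DecidableEq m]
    (A B S P : Matrix n n ℂ) (L : Matrix n m ℂ) (c : ℂ)
    (hBA : B * A = 1) (hAB : A * B = 1) (hPS : P * S = 1) (hSP : S * P = 1)
    (hPh : Pᴴ = P)
    (hLL : L * Lᴴ = (-(Complex.I*c)) • S + Complex.I • (A*S) - Complex.I • (S*Aᴴ)) :
    1 - (1 + Complex.I • (Lᴴ*P*B*L))ᴴ * (1 + Complex.I • (Lᴴ*P*B*L))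
      = (Complex.I*c) • (Lᴴ*Bᴴ*P*B*L) := by
  have hBA' : ∀ (X : Matrix n m ℂ), B*(A*X) = X := fun X => by
    rw [← Matrix.mul_assoc, hBA, Matrix.one_mul]
  have hAB' : ∀ (X : Matrix n m ℂ), A*(B*X) = X := fun X => by
    rw [← Matrix.mul_assoc, hAB, Matrix.one_mul]
  have hPS' : ∀ (X : Matrix n m ℂ), P*(S*X) = X := fun X => by
    rw [← Matrix.mul_assoc, hPS, Matrix.one_mul]
  have hSP' : ∀ (X : Matrix n m ℂ), S*(P*X) = X := fun X => by
    rw [← Matrix.mul_assoc, hSP, Matrix.one_mul]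
  have hBAh : Bᴴ*Aᴴ = 1 := by rw [← conjTranspose_mul, hAB, conjTranspose_one]
  have hBAh' : ∀ (X : Matrix n m ℂ), Bᴴ*(Aᴴ*X) = X := fun X => by
    rw [← Matrix.mul_assoc, hBAh, Matrix.one_mul]
  simp only [conjTranspose_add, conjTranspose_one, conjTranspose_smul, conjTranspose_mul,
    conjTranspose_conjTranspose, hPh, Complex.star_def, Complex.conj_I, neg_smul]
  simp only [Matrix.add_mul, Matrix.mul_add, Matrix.one_mul, Matrix.mul_one, smul_mul_assoc,
    mul_smul_comm, smul_smul, neg_mul, mul_neg, neg_neg, Complex.I_mul_I, neg_smul, one_smul,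
    Matrix.mul_assoc, Matrix.neg_mul, Matrix.mul_neg]
  rw [show L * (Lᴴ * (P * (B * L))) = (L * Lᴴ) * (P * (B * L)) from
    (Matrix.mul_assoc _ _ _).symm]
  rw [hLL]
  simp only [Matrix.add_mul, Matrix.sub_mul, smul_mul_assoc, Matrix.mul_add, Matrix.mul_sub,
    mul_smul_comm, smul_smul, Matrix.smul_mul, Matrix.mul_smul, Matrix.mul_assoc, hSP', hPS',
    hAB', hBA', hBAh', neg_smul, neg_mul, mul_neg, neg_neg, Complex.I_mul_I, one_smul,
    Matrix.mul_neg, Matrix.neg_mul]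
  abel_nf
  match_scalars <;> ring_nf
  all_goals (have h3 : Complex.I^3 = -Complex.I := by simp [pow_succ, Complex.I_mul_I]
             rw [h3]; ring)

/-- the transfer function `W_Σ(z) = I + iΛ*S₀⁻¹(zI − α)⁻¹Λ` of an admissible
quadruple satisfies `I − W_Σ(z)*W_Σ(z) = i(z − z̄)Λ*(z̄I − α*)⁻¹S₀⁻¹(zI − α)⁻¹Λ`; it is
unitary on the real line (off the spectrum of `α`) and contractive in the open lower
half-plane. -/
theorem transfer_function_unitary_and_contractive
    {n m₁ m₂ : ℕ} (α S₀ : Matrix (Fin n) (Fin n) ℂ)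
    (θ₁ : Matrix (Fin n) (Fin m₁) ℂ) (θ₂ : Matrix (Fin n) (Fin m₂) ℂ)
    (hadm : Admissible α S₀ θ₁ θ₂)
    (Λ : Matrix (Fin n) (Fin m₁ ⊕ Fin m₂) ℂ) (hΛ : Λ = Matrix.fromCols θ₁ θ₂)
    (W : ℂ → Matrix (Fin m₁ ⊕ Fin m₂) (Fin m₁ ⊕ Fin m₂) ℂ)
    (hW : ∀ z : ℂ, W z = 1 + Complex.I • (Λᴴ * S₀⁻¹ * (z • 1 - α)⁻¹ * Λ)) :
    (∀ z : ℂ, z ∉ spectrum ℂ α → (starRingEnd ℂ) z ∉ spectrum ℂ α →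
      1 - (W z)ᴴ * W z =
        (Complex.I * (z - (starRingEnd ℂ) z)) •
          (Λᴴ * ((starRingEnd ℂ) z • 1 - αᴴ)⁻¹ * S₀⁻¹ * (z • 1 - α)⁻¹ * Λ)) ∧
    (∀ lam : ℝ, (lam : ℂ) ∉ spectrum ℂ α →
      (W (lam : ℂ))ᴴ * W (lam : ℂ) = 1 ∧ W (lam : ℂ) * (W (lam : ℂ))ᴴ = 1) ∧
    (∀ z : ℂ, z.im < 0 → (1 - (W z)ᴴ * W z).PosSemidef) := by
  obtain ⟨hpos, heq⟩ := hadm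
  have hSdet : IsUnit S₀.det := hpos.det_pos.ne'.isUnit
  have hPh : (S₀⁻¹)ᴴ = S₀⁻¹ := hpos.isHermitian.inv
  have hPS : S₀⁻¹ * S₀ = 1 := Matrix.nonsing_inv_mul _ hSdet
  have hSP : S₀ * S₀⁻¹ = 1 := Matrix.mul_nonsing_inv _ hSdet
  have hLL : α * S₀ - S₀ * αᴴ = Complex.I • (Λ * Λᴴ) := by
    rw [hΛ, conjTranspose_fromCols_eq_fromRows_conjTranspose, fromCols_mul_fromRows]
    exact heq
  have hLL0 : Λ * Λᴴ = (-Complex.I) • (α * S₀ - S₀ * αᴴ) := by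
    rw [hLL, smul_smul, neg_mul, Complex.I_mul_I, neg_neg, one_smul]
  -- the main identity, valid whenever `z•1 - α` is invertible
  have key : ∀ z : ℂ, IsUnit (z • 1 - α).det →
      1 - (W z)ᴴ * W z = (Complex.I * (z - (starRingEnd ℂ) z)) •
        (Λᴴ * ((z • 1 - α)⁻¹)ᴴ * S₀⁻¹ * (z • 1 - α)⁻¹ * Λ) := by
    intro z hz
    have hBA := Matrix.nonsing_inv_mul _ hz
    have hAB := Matrix.mul_nonsing_inv _ hz
    have hLL2 : Λ * Λᴴ = (-(Complex.I*(z - (starRingEnd ℂ) z))) • S₀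
        + Complex.I • ((z • 1 - α)*S₀) - Complex.I • (S₀*(z • 1 - α)ᴴ) := by
      rw [hLL0]
      simp only [Matrix.sub_mul, Matrix.mul_sub, Matrix.smul_mul, Matrix.mul_smul,
        conjTranspose_sub, conjTranspose_smul, conjTranspose_one, Complex.star_def,
        Matrix.one_mul, Matrix.mul_one, smul_sub, smul_smul]
      match_scalars <;> simp [Complex.mul_conj] <;> ring
    have h := key_alg (z • 1 - α) (z • 1 - α)⁻¹ S₀ S₀⁻¹ Λ (z - (starRingEnd ℂ) z)
      hBA hAB hPS hSP hPh hLL2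
    rw [hW z]
    have hW2 : Λᴴ * S₀⁻¹ * (z • 1 - α)⁻¹ * Λ = Λᴴ * S₀⁻¹ * (z • 1 - α)⁻¹ * Λ := rfl
    exact h
  have specUnit : ∀ z : ℂ, z ∉ spectrum ℂ α → IsUnit (z • 1 - α).det := by
    intro z hz
    have := spectrum.notMem_iff.mp hz
    rw [Algebra.algebraMap_eq_smul_one] at this
    exact (Matrix.isUnit_iff_isUnit_det _).mp this
  refine ⟨?_, ?_, ?_⟩
  · intro z hz hz'
    rw [key z (specUnit z hz)]
    congr 2
    rw [Matrix.conjTranspose_nonsing_inv]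
    congr 2
    simp [conjTranspose_smul, Complex.star_def]
  · intro lam hl
    have h := key (lam : ℂ) (specUnit _ hl)
    rw [Complex.conj_ofReal, sub_self, mul_zero, zero_smul] at h
    have h1 : (W (lam : ℂ))ᴴ * W (lam : ℂ) = 1 := by
      have := sub_eq_zero.mp h
      exact this.symm
    exact ⟨h1, mul_eq_one_comm.mp h1⟩
  · intro z hz
    by_cases hu : IsUnit (z • 1 - α).det
    · rw [key z hu]
      have hc : Complex.I * (z - (starRingEnd ℂ) z) = ((-(2*z.im) : ℝ) : ℂ) := by
        rw [Complex.sub_conj]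
        push_cast
        ring_nf
        simp [Complex.I_sq]
        try ring
      rw [hc]
      have hM : (Λᴴ * ((z • 1 - α)⁻¹)ᴴ * S₀⁻¹ * (z • 1 - α)⁻¹ * Λ).PosSemidef := by
        have := (hpos.inv.posSemidef).conjTranspose_mul_mul_same ((z • 1 - α)⁻¹ * Λ)
        simpa only [conjTranspose_mul, Matrix.mul_assoc] using this
      refine Matrix.PosSemidef.of_dotProduct_mulVec_nonneg ?_ ?_
      · show _ᴴ = _
        rw [conjTranspose_smul, hM.1]
        congr 1
        simp [Complex.star_def, Complex.conj_ofReal]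
      · intro x
        rw [smul_mulVec, dotProduct_smul]
        have h0 : (0:ℂ) ≤ ((-(2*z.im) : ℝ) : ℂ) := by
          rw [Complex.zero_le_real]
          nlinarith
        exact mul_nonneg h0 (hM.dotProduct_mulVec_nonneg x)
    · have h0 : (z • 1 - α)⁻¹ = 0 := Matrix.nonsing_inv_apply_not_isUnit _ hu
      rw [hW z, h0]
      simp only [Matrix.mul_zero, Matrix.zero_mul, smul_zero, add_zero, Matrix.conjTranspose_one,
        Matrix.one_mul, sub_self]
      exact Matrix.PosSemidef.zero
end
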